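/- arXiv:2410.10064 — 3 statements merged into one kernel-verified Lean document; each statement's English description precedes it below -/
import Mathlib

section
/- For α, β ∈ k, the polynomial φ_{α,β}(X) has a multiple root in k if and only if D(α,β) = 0. -/
section AuxLemmas
open Polynomial
noncomputable section

lemma aux_prod_sub {K : Type*} [Field K] {ζ : K} {n : ℕ} (hζ : IsPrimitiveRoot ζ n)
    (hn : 0 < n) (a b : K) :
    ∏ i ∈ Finset.range n, (a - ζ ^ i * b) = a ^ n - b ^ n := by
  have h := X_pow_sub_C_eq_prod hζ hn (rfl : b ^ n = b ^ n)
  have h2 := congrArg (Polynomial.eval a) h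
  simpa [eval_prod] using h2.symm

lemma aux_sq_dvd_prod_iff {K : Type*} [Field K] {n : ℕ} (r : ℕ → K) :
    (∃ x : K, (X - C x) ^ 2 ∣ ∏ t ∈ Finset.range n, (X - C (r t))) ↔
      ∃ t < n, ∃ t' < n, t ≠ t' ∧ r t = r t' := by
  classical
  set p : Polynomial K := ∏ t ∈ Finset.range n, (X - C (r t)) with hp
  have hmonic : p.Monic := monic_prod_of_monic _ _ fun t _ => monic_X_sub_C (r t)
  have hp0 : p ≠ 0 := hmonic.ne_zero
  have hroots : p.roots = (Finset.range n).val.map r := by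
    rw [hp, Finset.prod]
    have := roots_multiset_prod_X_sub_C ((Finset.range n).val.map r)
    rw [Multiset.map_map] at this
    exact this
  constructor
  · rintro ⟨x, hx⟩
    have h2 : 2 ≤ p.rootMultiplicity x := (le_rootMultiplicity_iff hp0).mpr hx
    rw [← count_roots, hroots, Multiset.count_map] at h2
    have hcard : 1 < (Finset.filter (fun a => x = r a) (Finset.range n)).card := h2
    obtain ⟨a, ha, b, hb, hne⟩ := Finset.one_lt_card.mp hcard
    rw [Finset.mem_filter, Finset.mem_range] at ha hb
    exact ⟨a, ha.1, b, hb.1, hne, by rw [← ha.2, ← hb.2]⟩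
  · rintro ⟨t, ht, t', ht', hne, heq⟩
    refine ⟨r t, ?_⟩
    have hsub : ({t, t'} : Finset ℕ) ⊆ Finset.range n := by
      intro a ha
      simp only [Finset.mem_insert, Finset.mem_singleton] at ha
      rcases ha with rfl | rfl <;> simp [ht, ht']
    have := Finset.prod_dvd_prod_of_subset _ _ (fun t => X - C (r t)) hsub
    rwa [Finset.prod_pair hne, ← heq, ← sq] at this

end

end AuxLemmas


open scoped TensorProduct

noncomputable section

open Polynomial

/-- The polynomial
`φ_{α,β}(X) = (X - β) ∏_{k=1}^{(N-1)/2} (X² - β(q^{2k} + q^{-2k})X + β² + ((q^{2k} - q^{-2k})²/(1-q²))α)`. -/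
def phiPoly {k : Type*} [Field k] (q : k) (N : ℕ) (α β : k) : Polynomial k :=
  (X - C β) *
    ∏ j ∈ Finset.Icc 1 ((N - 1) / 2),
      (X ^ 2 - C (β * (q ^ (2 * (j : ℤ)) + q ^ (-(2 * (j : ℤ))))) * X
        + C (β ^ 2 + (q ^ (2 * (j : ℤ)) - q ^ (-(2 * (j : ℤ)))) ^ 2 / (1 - q ^ 2) * α))

/-- The scalar `D(α,β) = ∏_{k=0}^{N-1} (β² - ((q^k + q^{-k})²/(1-q²))·α)`. -/
def Dscalar {k : Type*} [Field k] (q : k) (N : ℕ) (α β : k) : k :=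
  ∏ j ∈ Finset.range N, (β ^ 2 - (q ^ (j : ℤ) + q ^ (-(j : ℤ))) ^ 2 / (1 - q ^ 2) * α)

end

noncomputable section

open Polynomial

/-- **Theorem.** For `α, β ∈ k`, the polynomial `φ_{α,β}(X)` has a multiple root in `k`
if and only if `D(α,β) = 0`. -/
theorem phi_has_multiple_root_iff
    {k : Type*} [Field k] [IsAlgClosed k] [CharZero k] {q : k} {N : ℕ}
    (hN : Odd N) (hN1 : 1 < N) (hq : IsPrimitiveRoot q N) (α β : k) :
    (∃ x : k, (X - C x) ^ 2 ∣ phiPoly q N α β) ↔ Dscalar q N α β = 0 := by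
  obtain ⟨m, hm⟩ := hN
  have hm1 : 1 ≤ m := by omega
  have hNpos : 0 < N := by omega
  have hq0 : q ≠ 0 := hq.ne_zero (by omega)
  have hqN : q ^ N = 1 := hq.pow_eq_one
  have hw : IsPrimitiveRoot (q ^ 2) N :=
    hq.pow_of_coprime 2 (Nat.coprime_two_left.mpr ⟨m, hm⟩)
  have hw0 : q ^ 2 ≠ 0 := pow_ne_zero _ hq0
  have hwN : (q ^ 2) ^ N = 1 := hw.pow_eq_one
  have h1q2 : (1 : k) - q ^ 2 ≠ 0 := by
    intro h
    exact hw.ne_one hN1 (by linear_combination -h)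
  have h2 : (2 : k) ≠ 0 := two_ne_zero
  obtain ⟨s, hs⟩ : ∃ s : k, s ^ 2 = β ^ 2 - 4 * (α / (1 - q ^ 2)) :=
    IsAlgClosed.exists_pow_nat_eq _ (by norm_num)
  have hs' : s ^ 2 * (1 - q ^ 2) = β ^ 2 * (1 - q ^ 2) - 4 * α := by
    field_simp at hs
    linear_combination hs
  set u : k := (β + s) / 2 with hu
  set v : k := (β - s) / 2 with hv
  have huv : u + v = β := by rw [hu, hv]; ring
  have hα : u * v * (1 - q ^ 2) = α := by
    rw [hu, hv]
    field_simp
    linear_combination -hs'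
  clear_value u v
  clear hs hs' hu hv
  set r : ℕ → k := fun t => (q ^ 2) ^ t * u + ((q ^ 2) ^ t)⁻¹ * v with hr
  -- Step 1 : factor phiPoly into linear factors
  have step1 : phiPoly q N α β = ∏ t ∈ Finset.range N, (X - C (r t)) := by
    have expand : ∀ a b : k, (X - C a) * (X - C b) = X ^ 2 - C (a + b) * X + C (a * b) := by
      intro a b; rw [map_add, map_mul]; ring
    have hkey : ∀ j ∈ Finset.Icc 1 m,
        (X ^ 2 - C (β * (q ^ (2 * (j : ℤ)) + q ^ (-(2 * (j : ℤ))))) * X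
          + C (β ^ 2 + (q ^ (2 * (j : ℤ)) - q ^ (-(2 * (j : ℤ)))) ^ 2 / (1 - q ^ 2) * α))
        = (X - C (r j)) * (X - C (r (N - j))) := by
      intro j hj
      rw [Finset.mem_Icc] at hj
      have hwj : (q ^ 2) ^ j ≠ 0 := pow_ne_zero _ hw0
      have hzj : q ^ (2 * (j : ℤ)) = (q ^ 2) ^ j := by
        rw [show (2 * (j : ℤ)) = ((2 * j : ℕ) : ℤ) by push_cast; ring, zpow_natCast, pow_mul]
      have hzjn : q ^ (-(2 * (j : ℤ))) = ((q ^ 2) ^ j)⁻¹ := by rw [zpow_neg, hzj]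
      have hNj : (q ^ 2) ^ (N - j) = ((q ^ 2) ^ j)⁻¹ := by
        have h1 : (q ^ 2) ^ (N - j) * (q ^ 2) ^ j = 1 := by
          rw [← pow_add, show N - j + j = N by omega, hwN]
        exact eq_inv_of_mul_eq_one_left h1
      have c1 : β * ((q ^ 2) ^ j + ((q ^ 2) ^ j)⁻¹)
          = ((q ^ 2) ^ j * u + ((q ^ 2) ^ j)⁻¹ * v)
            + (((q ^ 2) ^ j)⁻¹ * u + (q ^ 2) ^ j * v) := by
        rw [← huv]; ring
      have c2 : β ^ 2 + ((q ^ 2) ^ j - ((q ^ 2) ^ j)⁻¹) ^ 2 / (1 - q ^ 2) * α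
          = ((q ^ 2) ^ j * u + ((q ^ 2) ^ j)⁻¹ * v)
            * (((q ^ 2) ^ j)⁻¹ * u + (q ^ 2) ^ j * v) := by
        rw [← hα, ← huv]
        field_simp
        ring
      rw [expand]
      simp only [hr, hNj, inv_inv]
      rw [hzj, hzjn, c1, c2]
    have hm2 : (N - 1) / 2 = m := by omega
    have hr0 : r 0 = β := by simp [hr, huv]
    rw [phiPoly, hm2, Finset.prod_congr rfl hkey, Finset.prod_mul_distrib]
    have e1 : ∏ j ∈ Finset.Icc 1 m, (X - C (r j))
        = ∏ i ∈ Finset.range m, (X - C (r (1 + i))) := by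
      rw [← Finset.Ico_add_one_right_eq_Icc, Finset.prod_Ico_eq_prod_range]
      simp
    have e2 : ∏ j ∈ Finset.Icc 1 m, (X - C (r (N - j)))
        = ∏ i ∈ Finset.range m, (X - C (r (1 + (m + i)))) := by
      rw [← Finset.Ico_add_one_right_eq_Icc, Finset.prod_Ico_eq_prod_range]
      simp only [Nat.succ_sub_one, Nat.add_sub_cancel]
      rw [← Finset.prod_range_reflect]
      apply Finset.prod_congr rfl
      intro i hi
      rw [Finset.mem_range] at hi
      have : N - (1 + (m - 1 - i)) = 1 + (m + i) := by omega
      rw [this]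
    rw [e1, e2]
    rw [show N = 1 + (m + m) by omega, Finset.prod_range_add, Finset.prod_range_add]
    simp only [Finset.range_one, Finset.prod_singleton, hr0]
    try ring
  -- Step 2 : compute Dscalar
  have step2 : Dscalar q N α β = (u ^ N - v ^ N) ^ 2 := by
    have hfac : ∀ j ∈ Finset.range N,
        β ^ 2 - (q ^ (j : ℤ) + q ^ (-(j : ℤ))) ^ 2 / (1 - q ^ 2) * α
        = (u - (q ^ 2) ^ j * v) * (u - ((q ^ 2)⁻¹) ^ j * v) := by
      intro j _
      have hqj : q ^ j ≠ 0 := pow_ne_zero _ hq0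
      rw [zpow_neg, zpow_natCast, ← hα, ← huv]
      rw [inv_pow]
      field_simp
      ring
    rw [Dscalar, Finset.prod_congr rfl hfac, Finset.prod_mul_distrib,
      aux_prod_sub hw hNpos, aux_prod_sub hw.inv hNpos]
    ring
  rw [step1, step2, aux_sq_dvd_prod_iff, pow_eq_zero_iff (two_ne_zero), sub_eq_zero]
  -- Step 3 : equivalence
  constructor
  · rintro ⟨t, ht, t', ht', hne, heq⟩
    have ha : (q ^ 2) ^ t ≠ 0 := pow_ne_zero _ hw0
    have hb : (q ^ 2) ^ t' ≠ 0 := pow_ne_zero _ hw0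
    have hab : (q ^ 2) ^ t ≠ (q ^ 2) ^ t' := fun h => hne (hw.pow_inj ht ht' h)
    have key : u * ((q ^ 2) ^ t * (q ^ 2) ^ t') = v := by
      have h0 : ((q ^ 2) ^ t - (q ^ 2) ^ t')
          * (u * ((q ^ 2) ^ t * (q ^ 2) ^ t') - v) = 0 := by
        simp only [hr] at heq
        field_simp at heq
        linear_combination heq
      rcases mul_eq_zero.mp h0 with h | h
      · exact absurd (sub_eq_zero.mp h) hab
      · exact sub_eq_zero.mp h
    calc u ^ N = u ^ N * (((q ^ 2) ^ N) ^ t * ((q ^ 2) ^ N) ^ t') := by rw [hwN]; ring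
    _ = (u * ((q ^ 2) ^ t * (q ^ 2) ^ t')) ^ N := by ring
    _ = v ^ N := by rw [key]
  · intro huvN
    by_cases hu0 : u = 0
    · have hv0 : v = 0 := by
        have : v ^ N = 0 := by rw [← huvN, hu0, zero_pow (by omega)]
        exact pow_eq_zero_iff (by omega) |>.mp this
      exact ⟨0, by omega, 1, by omega, by omega, by simp [hr, hu0, hv0]⟩
    · have : NeZero N := ⟨by omega⟩
      obtain ⟨i, hiN, hi⟩ : ∃ i < N, (q ^ 2) ^ i = v / u := by
        refine hw.eq_pow_of_pow_eq_one ?_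
        rw [div_pow, ← huvN, div_self (pow_ne_zero _ hu0)]
      have hvi : (q ^ 2) ^ i * u = v := by
        field_simp at hi
        exact hi
      by_cases hi0 : i = 0
      · have hveq : u = v := by
          rw [← hvi, hi0, pow_zero, one_mul]
        have hq2N1 : (q ^ 2) ^ (N - 1) = (q ^ 2)⁻¹ := by
          have h1 : (q ^ 2) ^ (N - 1) * (q ^ 2) = 1 := by
            rw [← pow_succ, show N - 1 + 1 = N by omega, hwN]
          exact eq_inv_of_mul_eq_one_left h1
        refine ⟨1, by omega, N - 1, by omega, by omega, ?_⟩
        simp only [hr, hq2N1, inv_inv, pow_one]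
        rw [← hveq]
        ring
      · refine ⟨0, by omega, i, by omega, fun h => hi0 h.symm, ?_⟩
        simp only [hr, pow_zero, one_mul, inv_one, ← hvi]
        have hwi : (q ^ 2) ^ i ≠ 0 := pow_ne_zero _ hw0
        field_simp
        ring


end
end

section
/- Let A be a right coideal subalgebra of U(D) and let y be a nonzero element of A with leading coefficient c ∈ kΓ and degree m = (m₁, …, m_θ). Then: (a) c belongs to A; and (b) for every index k with m_k > 0, there exist scalars β_{k+1}, …, β_θ, α ∈ k such that the element x_k + Σ_{ℓ=k+1}^{θ} β_ℓ u_{g_k} u_{g_ℓ}^{−1} x_ℓ + α u_{g_k} belongs to A. -/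
open scoped TensorProduct




noncomputable section

/-- A subalgebra `A` of a Hopf algebra (or bialgebra) `H` is a *right coideal subalgebra*
if `Δ(A) ⊆ A ⊗ H`. -/
def IsRightCoidealSubalgebra (k : Type*) {H : Type*} [CommSemiring k] [Semiring H]
    [Algebra k H] [CoalgebraStruct k H] (A : Subalgebra k H) : Prop :=
  ∀ a ∈ A, Coalgebra.comul (R := k) a ∈
    LinearMap.range (TensorProduct.map (Subalgebra.toSubmodule A).subtype
      (LinearMap.id (R := k) (M := H)))

/-- A datum `D = (Γ, (g_i), (χ_i), (λ_{ij}), (μ_i))` for the lifting of a finite quantum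
linear space. -/
structure LiftingDatum (k : Type*) [Field k] (Γ : Type*) [CommGroup Γ] [Fintype Γ]
    (θ : ℕ) where
  g : Fin θ → Γ
  χ : Fin θ → (Γ →* kˣ)
  chi_self : ∀ i, χ i (g i) ≠ 1
  chi_symm : ∀ i j, i ≠ j → χ i (g j) * χ j (g i) = 1
  lam : Fin θ → Fin θ → k
  lam_cond : ∀ i j, i < j → (g i * g j = 1 ∨ χ i * χ j ≠ 1) → lam i j = 0
  mu : Fin θ → k
  mu_mem : ∀ i, mu i = 0 ∨ mu i = 1
  mu_cond : ∀ i, (g i ^ orderOf (χ i (g i)) = 1 ∨ (χ i) ^ orderOf (χ i (g i)) ≠ 1) →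
    mu i = 0

namespace LiftingDatum

variable {k : Type*} [Field k] {Γ : Type*} [CommGroup Γ] [Fintype Γ] {θ : ℕ}

/-- `N_i`, the order of `χ_i(g_i)`. -/
def NN (Dat : LiftingDatum k Γ θ) (i : Fin θ) : ℕ := orderOf (Dat.χ i (Dat.g i))

end LiftingDatum

/-- A realization of the Hopf algebra `U(D)` obtained by lifting a finite quantum linear
space: grouplike elements `u_g` (`g ∈ Γ`), skew-primitive elements `x_1, …, x_θ`, the
defining relations, the prescribed comultiplication and counit values, and the PBW basis
`{u_g x₁^{m₁} ⋯ x_θ^{m_θ}}` (which pins down `H` as the presented Hopf algebra). -/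
structure UDData (k : Type*) [Field k] (Γ : Type*) [CommGroup Γ] [Fintype Γ] (θ : ℕ)
    (Dat : LiftingDatum k Γ θ) (H : Type*) [Ring H] [HopfAlgebra k H] where
  u : Γ →* H
  x : Fin θ → H
  rel_ux : ∀ (gg : Γ) (i : Fin θ), u gg * x i = ((Dat.χ i gg : kˣ) : k) • (x i * u gg)
  rel_xx : ∀ i j : Fin θ, i < j →
    x j * x i = ((Dat.χ i (Dat.g j) : kˣ) : k) • (x i * x j)
      + Dat.lam i j • ((1 : H) - u (Dat.g i) * u (Dat.g j))
  rel_xN : ∀ i : Fin θ, x i ^ Dat.NN i = Dat.mu i • ((1 : H) - u (Dat.g i) ^ Dat.NN i)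
  comul_u : ∀ gg : Γ, Coalgebra.comul (R := k) (u gg) = u gg ⊗ₜ[k] u gg
  comul_x : ∀ i : Fin θ,
    Coalgebra.comul (R := k) (x i) = x i ⊗ₜ[k] u (Dat.g i) + (1 : H) ⊗ₜ[k] x i
  counit_u : ∀ gg : Γ, Coalgebra.counit (R := k) (u gg) = 1
  counit_x : ∀ i : Fin θ, Coalgebra.counit (R := k) (x i) = 0
  basis : Module.Basis (Γ × (∀ i : Fin θ, Fin (Dat.NN i))) k H
  basis_eq : ∀ (gg : Γ) (m : ∀ i : Fin θ, Fin (Dat.NN i)),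
    basis (gg, m) = u gg * (List.ofFn fun i : Fin θ => x i ^ ((m i : ℕ))).prod

namespace UDData

variable {k : Type*} [Field k] {Γ : Type*} [CommGroup Γ] [Fintype Γ] {θ : ℕ}
  {Dat : LiftingDatum k Γ θ} {H : Type*} [Ring H] [HopfAlgebra k H]

/-- The monomial `x^m = x₁^{m₁} ⋯ x_θ^{m_θ}`. -/
def xpow (UD : UDData k Γ θ Dat H) (m : Fin θ → ℕ) : H :=
  (List.ofFn fun i : Fin θ => UD.x i ^ m i).prod

end UDData

end


set_option linter.unusedSectionVars false

noncomputable section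

section ListAux

variable {M : Type*} [Monoid M] {θ : ℕ}

lemma listOfFn_update_eq_set (f : Fin θ → M) (l : Fin θ) (a : M) :
    List.ofFn (Function.update f l a) = (List.ofFn f).set l a := by
  apply List.ext_getElem
  · simp
  · intro i h1 h2
    simp only [List.length_ofFn] at h1
    rw [List.getElem_ofFn, List.getElem_set]
    rw [Function.update_apply]
    simp only [List.getElem_ofFn]
    by_cases hi : (⟨i, h1⟩ : Fin θ) = l
    · have hli : (l : ℕ) = i := by rw [← hi]
      simp [hi, hli]
    · have : ¬ ((l : ℕ) = i) := by
        intro h; apply hi; ext; simp [h]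
      simp [hi, this]

lemma listOfFn_drop_prod_eq_one (f : Fin θ → M) (l : Fin θ)
    (h : ∀ j, l < j → f j = 1) : (((List.ofFn f).drop (l + 1)).prod : M) = 1 := by
  apply List.prod_eq_one
  intro x hx
  rw [List.mem_iff_getElem] at hx
  obtain ⟨i, hi, rfl⟩ := hx
  rw [List.getElem_drop, List.getElem_ofFn]
  apply h
  simp only [List.length_drop, List.length_ofFn] at hi
  exact Fin.mk_lt_mk.mpr (by omega) |>.trans_le (le_refl _) |>.trans_eq rfl
    |>.trans_le (le_refl _)

lemma prod_ofFn_update (f : Fin θ → M) (l : Fin θ)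
    (h1 : ∀ j, l < j → f j = 1) (a : M) :
    (List.ofFn (Function.update f l (f l * a))).prod = (List.ofFn f).prod * a := by
  have hset := listOfFn_update_eq_set f l (f l * a)
  have hd := listOfFn_drop_prod_eq_one f l h1
  have hl : (l : ℕ) < (List.ofFn f).length := by simp [l.isLt]
  have hself : List.ofFn f = (List.ofFn f).set l (f l) := by
    rw [← listOfFn_update_eq_set, Function.update_eq_self]
  calc (List.ofFn (Function.update f l (f l * a))).prod
      = ((List.ofFn f).take l).prod * (f l * a) * 1 := by
        rw [hset, List.prod_set]
        simp [hl, hd]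
    _ = (((List.ofFn f).take l).prod * f l * 1) * a := by
        simp only [mul_one]; rw [mul_assoc]
    _ = (List.ofFn f).prod * a := by
        conv_rhs => rw [hself, List.prod_set]
        simp [hl, hd]

end ListAux

end

noncomputable section XpowAux

namespace UDData

variable {k : Type*} [Field k] {Γ : Type*} [CommGroup Γ] [Fintype Γ] {θ : ℕ}
  {Dat : LiftingDatum k Γ θ} {H : Type*} [Ring H] [HopfAlgebra k H]
  (UD : UDData k Γ θ Dat H)

/-- The `l`-th coordinate vector. -/
def eV (l : Fin θ) : Fin θ → ℕ := Pi.single l 1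

lemma eV_same (l : Fin θ) : eV l l = 1 := Pi.single_eq_same l 1

lemma eV_ne {l j : Fin θ} (h : j ≠ l) : eV l j = 0 := Pi.single_eq_of_ne h 1

lemma sum_eV (l : Fin θ) : ∑ i, eV l i = 1 := by
  simp [eV, Finset.sum_pi_single]

lemma xpow_zero : UD.xpow 0 = 1 := by
  apply List.prod_eq_one
  intro z hz
  rw [List.mem_ofFn] at hz
  obtain ⟨i, rfl⟩ := hz
  simp

lemma xpow_mul_x (p : Fin θ → ℕ) (l : Fin θ) (hp : ∀ j, l < j → p j = 0) :
    UD.xpow p * UD.x l = UD.xpow (p + eV l) := by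
  have hfun : (fun i => UD.x i ^ (p + eV l) i)
      = Function.update (fun i => UD.x i ^ p i) l (UD.x l ^ p l * UD.x l) := by
    funext i
    by_cases hi : i = l
    · subst hi
      simp [eV_same, pow_succ]
    · simp [Function.update_apply, hi, eV_ne hi]
  show (List.ofFn fun i => UD.x i ^ p i).prod * UD.x l
      = (List.ofFn fun i => UD.x i ^ (p + eV l) i).prod
  rw [hfun, prod_ofFn_update _ l (fun j hj => by rw [hp j hj, pow_zero])]

lemma exists_decomp (n : Fin θ → ℕ) (hn : n ≠ 0) :
    ∃ (l : Fin θ) (p : Fin θ → ℕ), n = p + eV l ∧ (∀ j, l < j → p j = 0) ∧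
      (∀ j, l < j → n j = 0) ∧ p l + 1 = n l ∧ (∀ j, j ≠ l → p j = n j) ∧
      (∑ i, p i) + 1 = ∑ i, n i := by
  classical
  set s := Finset.univ.filter (fun j => 0 < n j) with hs
  have hsne : s.Nonempty := by
    by_contra hemp
    apply hn
    funext j
    rw [Finset.not_nonempty_iff_eq_empty] at hemp
    by_contra hj
    have : j ∈ s := by simp [hs, Nat.pos_of_ne_zero hj]
    simp [hemp] at this
  set l := s.max' hsne with hl
  have hls : l ∈ s := s.max'_mem hsne
  have hnl : 0 < n l := by simpa [hs] using hls
  have hgt : ∀ j, l < j → n j = 0 := by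
    intro j hj
    by_contra hj0
    have : j ∈ s := by simp [hs, Nat.pos_of_ne_zero hj0]
    exact absurd (s.le_max' j this) (not_le.mpr hj)
  refine ⟨l, n - eV l, ?_, ?_, hgt, ?_, ?_, ?_⟩
  · funext j
    by_cases hj : j = l
    · subst hj
      have h1 : (n - eV l + eV l) l = n l - 1 + 1 := by
        simp [Pi.add_apply, Pi.sub_apply, eV_same]
      rw [h1]; omega
    · have h1 : (n - eV l + eV l) j = n j := by
        simp [Pi.add_apply, Pi.sub_apply, eV_ne hj]
      rw [h1]
  · intro j hj
    have := hgt j hj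
    simp [this, eV]
  · have h1 : (n - eV l) l = n l - 1 := by simp [Pi.sub_apply, eV_same]
    rw [h1]; omega
  · intro j hj; simp [eV_ne hj]
  · have h1 : ∑ i, (n - eV l) i = (n l - 1) + ∑ i ∈ Finset.univ.erase l, n i := by
      rw [← Finset.add_sum_erase _ _ (Finset.mem_univ l)]
      congr 1
      · simp [Pi.sub_apply, eV_same]
      · apply Finset.sum_congr rfl
        intro i hi
        have hil : i ≠ l := Finset.ne_of_mem_erase hi
        simp [Pi.sub_apply, eV_ne hil]
    have h2 : ∑ i, n i = n l + ∑ i ∈ Finset.univ.erase l, n i := by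
      rw [← Finset.add_sum_erase _ _ (Finset.mem_univ l)]
    omega

lemma xpow_decomp (n : Fin θ → ℕ) (hn : n ≠ 0) :
    ∃ (l : Fin θ) (p : Fin θ → ℕ), n = p + eV l ∧ (∀ j, l < j → p j = 0) ∧
      (∀ j, l < j → n j = 0) ∧ p l + 1 = n l ∧ (∀ j, j ≠ l → p j = n j) ∧
      (∑ i, p i) + 1 = ∑ i, n i ∧ UD.xpow n = UD.xpow p * UD.x l := by
  obtain ⟨l, p, h1, h2, h3, h4, h5, h6⟩ := exists_decomp n hn
  exact ⟨l, p, h1, h2, h3, h4, h5, h6, by rw [h1, UD.xpow_mul_x p l h2]⟩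

end UDData

end XpowAux

noncomputable section MasterAux

namespace UDData

variable {k : Type*} [Field k] {Γ : Type*} [CommGroup Γ] [Fintype Γ] {θ : ℕ}
  {Dat : LiftingDatum k Γ θ} {H : Type*} [Ring H] [HopfAlgebra k H]
  (UD : UDData k Γ θ Dat H)

lemma sub_eV_le (p : Fin θ → ℕ) (l : Fin θ) (i : Fin θ) : (p - eV l) i ≤ p i :=
  Nat.sub_le _ _

lemma sum_sub_eV (p : Fin θ → ℕ) (l : Fin θ) (h : 0 < p l) :
    (∑ i, (p - eV l) i) + 1 = ∑ i, p i := by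
  have h1 : ∑ i, (p - eV l) i = (p l - 1) + ∑ i ∈ Finset.univ.erase l, p i := by
    rw [← Finset.add_sum_erase _ _ (Finset.mem_univ l)]
    congr 1
    · simp [Pi.sub_apply, eV_same]
    · apply Finset.sum_congr rfl
      intro i hi
      have hil : i ≠ l := Finset.ne_of_mem_erase hi
      simp [Pi.sub_apply, eV_ne hil]
  have h2 : ∑ i, p i = p l + ∑ i ∈ Finset.univ.erase l, p i := by
    rw [← Finset.add_sum_erase _ _ (Finset.mem_univ l)]
  omega

lemma x_mul_u (l : Fin θ) (h : Γ) :
    UD.x l * UD.u h = (((Dat.χ l h)⁻¹ : kˣ) : k) • (UD.u h * UD.x l) := by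
  rw [UD.rel_ux h l, smul_smul, ← Units.val_mul, inv_mul_cancel, Units.val_one, one_smul]

end UDData

/-- The scalar arising when commuting `x^p` past `u_h`. -/
def scU {k : Type*} [Field k] {Γ : Type*} [CommGroup Γ] [Fintype Γ] {θ : ℕ}
    (Dat : LiftingDatum k Γ θ) (h : Γ) (p : Fin θ → ℕ) : kˣ :=
  ∏ j, (Dat.χ j h)⁻¹ ^ p j

/-- The scalar `δ_l(n)` appearing in the comultiplication expansion. -/
def dlt {k : Type*} [Field k] {Γ : Type*} [CommGroup Γ] [Fintype Γ] {θ : ℕ}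
    (Dat : LiftingDatum k Γ θ) (n : Fin θ → ℕ) (l : Fin θ) : k :=
  ((∏ j ∈ Finset.Iio l, (Dat.χ j (Dat.g l))⁻¹ ^ n j : kˣ) : k) *
    ∑ t ∈ Finset.range (n l), (((Dat.χ l (Dat.g l))⁻¹ : kˣ) : k) ^ t

namespace UDData

variable {k : Type*} [Field k] {Γ : Type*} [CommGroup Γ] [Fintype Γ] {θ : ℕ}
  {Dat : LiftingDatum k Γ θ} {H : Type*} [Ring H] [HopfAlgebra k H]
  (UD : UDData k Γ θ Dat H)

lemma scU_zero (h : Γ) : scU Dat h 0 = 1 := by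
  simp [scU]

lemma scU_add_eV (h : Γ) (p : Fin θ → ℕ) (l : Fin θ) :
    scU Dat h (p + eV l) = scU Dat h p * (Dat.χ l h)⁻¹ := by
  rw [scU, scU]
  have h1 : ∀ j : Fin θ, (Dat.χ j h)⁻¹ ^ (p + eV l) j
      = (Dat.χ j h)⁻¹ ^ p j * (Dat.χ j h)⁻¹ ^ eV l j := by
    intro j; rw [Pi.add_apply, pow_add]
  rw [Finset.prod_congr rfl (fun j _ => h1 j), Finset.prod_mul_distrib]
  congr 1
  rw [Finset.prod_eq_single l]
  · rw [eV_same, pow_one]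
  · intro j _ hj; rw [eV_ne hj, pow_zero]
  · intro hl; exact absurd (Finset.mem_univ l) hl

lemma xpow_mul_u : ∀ (N : ℕ) (p : Fin θ → ℕ), (∑ i, p i) = N → ∀ (h : Γ),
    UD.xpow p * UD.u h = ((scU Dat h p : kˣ) : k) • (UD.u h * UD.xpow p) := by
  intro N
  induction N using Nat.strong_induction_on with
  | _ N ih =>
    intro p hN h
    by_cases hp : p = 0
    · subst hp
      rw [UD.xpow_zero, scU_zero]
      simp
    · obtain ⟨l, q, hpe, hq, hzero, hsucc, hrest, hsum, hX⟩ := UD.xpow_decomp p hp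
      have hNpos : 0 < N := by omega
      have ihq := ih (∑ i, q i) (by omega) q rfl h
      rw [hX, mul_assoc, UD.x_mul_u l h, mul_smul_comm, ← mul_assoc, ihq,
        smul_mul_assoc, smul_smul, mul_assoc, UD.xpow_mul_x q l hq, ← hpe]
      congr 1
      rw [hpe, scU_add_eV, Units.val_mul, mul_comm]

lemma u_mul_monomial (g h : Γ) (p : Fin θ → ℕ) :
    UD.u g * (UD.u h * UD.xpow p) = UD.u (g * h) * UD.xpow p := by
  rw [← mul_assoc, ← map_mul]

lemma dlt_zero {n : Fin θ → ℕ} {l : Fin θ} (h : n l = 0) : dlt Dat n l = 0 := by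
  rw [dlt, h]
  simp

lemma dlt_congr {n p : Fin θ → ℕ} {l : Fin θ} (h1 : ∀ j, j < l → n j = p j)
    (h2 : n l = p l) : dlt Dat n l = dlt Dat p l := by
  rw [dlt, dlt, h2]
  congr 2
  apply Finset.prod_congr rfl
  intro j hj
  rw [h1 j (Finset.mem_Iio.mp hj)]

lemma dlt_step (p : Fin θ → ℕ) (l₀ : Fin θ) (hpsupp : ∀ j, l₀ < j → p j = 0) :
    dlt Dat (p + eV l₀) l₀ = dlt Dat p l₀ + ((scU Dat (Dat.g l₀) p : kˣ) : k) := by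
  have hx : scU Dat (Dat.g l₀) p
      = (∏ j ∈ Finset.Iio l₀, (Dat.χ j (Dat.g l₀))⁻¹ ^ p j)
        * (Dat.χ l₀ (Dat.g l₀))⁻¹ ^ p l₀ := by
    rw [scU, ← Finset.prod_subset (Finset.subset_univ (insert l₀ (Finset.Iio l₀)))
      (by
        intro j _ hj
        simp only [Finset.mem_insert, Finset.mem_Iio] at hj
        push_neg at hj
        have : l₀ < j := lt_of_le_of_ne hj.2 (Ne.symm hj.1)
        rw [hpsupp j this, pow_zero])]
    rw [Finset.prod_insert (by simp), mul_comm]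
  have hIio : ∀ j ∈ Finset.Iio l₀, (Dat.χ j (Dat.g l₀))⁻¹ ^ (p + eV l₀) j
      = (Dat.χ j (Dat.g l₀))⁻¹ ^ p j := by
    intro j hj
    have : j ≠ l₀ := ne_of_lt (Finset.mem_Iio.mp hj)
    rw [Pi.add_apply, eV_ne this, add_zero]
  have hl0 : (p + eV l₀) l₀ = p l₀ + 1 := by
    rw [Pi.add_apply, eV_same]
  rw [dlt, dlt, Finset.prod_congr rfl hIio, hl0, Finset.sum_range_succ, mul_add, hx,
    Units.val_mul, Units.val_pow_eq_pow_val]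

lemma dlt_ne_zero {n : Fin θ → ℕ} {l : Fin θ} (h0 : 0 < n l) (hN : n l < Dat.NN l) :
    dlt Dat n l ≠ 0 := by
  apply mul_ne_zero (Units.ne_zero _)
  intro hsum
  have hgeom := geom_sum_mul (((Dat.χ l (Dat.g l))⁻¹ : kˣ) : k) (n l)
  rw [hsum, zero_mul] at hgeom
  have hpow : ((Dat.χ l (Dat.g l))⁻¹ : kˣ) ^ (n l) = 1 := by
    apply Units.ext
    push_cast
    have := sub_eq_zero.mp hgeom.symm
    simpa using this
  have : (Dat.χ l (Dat.g l)) ^ (n l) = 1 := by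
    rw [← inv_inj, ← inv_pow, hpow, inv_one]
  have hdvd := orderOf_dvd_of_pow_eq_one this
  have := Nat.le_of_dvd h0 hdvd
  exact absurd hN (not_lt.mpr this)

/-- The span of monomials `u_h x^p` with `p ≤ n` componentwise and `|p| + 2 ≤ |n|`. -/
def Wlow (n : Fin θ → ℕ) : Submodule k H :=
  Submodule.span k {z : H | ∃ (h : Γ) (p : Fin θ → ℕ),
    (∀ i, p i ≤ n i) ∧ (∑ i, p i) + 2 ≤ (∑ i, n i) ∧ z = UD.u h * UD.xpow p}

/-- The "error" submodule `H ⊗ Wlow n` of `H ⊗ H`. -/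
def Errn (n : Fin θ → ℕ) : Submodule k (H ⊗[k] H) :=
  LinearMap.range (LinearMap.lTensor H (UD.Wlow n).subtype)

lemma tmul_mem_range (W : Submodule k H) (a : H) {w : H} (hw : w ∈ W) :
    a ⊗ₜ[k] w ∈ LinearMap.range (LinearMap.lTensor (R := k) H W.subtype) :=
  ⟨a ⊗ₜ[k] (⟨w, hw⟩ : W), by simp⟩

lemma range_mul_tmul_mem (W W' : Submodule k H) (b c : H)
    (hc : ∀ w ∈ W, w * c ∈ W') {t : H ⊗[k] H}
    (ht : t ∈ LinearMap.range (LinearMap.lTensor (R := k) H W.subtype)) :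
    t * (b ⊗ₜ[k] c) ∈ LinearMap.range (LinearMap.lTensor (R := k) H W'.subtype) := by
  obtain ⟨s, rfl⟩ := ht
  induction s using TensorProduct.induction_on with
  | zero => simp only [map_zero, zero_mul]; exact Submodule.zero_mem _
  | tmul a w =>
    rw [LinearMap.lTensor_tmul, Algebra.TensorProduct.tmul_mul_tmul]
    exact tmul_mem_range _ _ (hc w w.2)
  | add s1 s2 h1 h2 =>
    rw [map_add, add_mul]
    exact Submodule.add_mem _ h1 h2

lemma tmul_mul_range_mem (W W' : Submodule k H) (b c : H)
    (hc : ∀ w ∈ W, c * w ∈ W') {t : H ⊗[k] H}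
    (ht : t ∈ LinearMap.range (LinearMap.lTensor (R := k) H W.subtype)) :
    (b ⊗ₜ[k] c) * t ∈ LinearMap.range (LinearMap.lTensor (R := k) H W'.subtype) := by
  obtain ⟨s, rfl⟩ := ht
  induction s using TensorProduct.induction_on with
  | zero => simp only [map_zero, mul_zero]; exact Submodule.zero_mem _
  | tmul a w =>
    rw [LinearMap.lTensor_tmul, Algebra.TensorProduct.tmul_mul_tmul]
    exact tmul_mem_range _ _ (hc w w.2)
  | add s1 s2 h1 h2 =>
    rw [map_add, mul_add]
    exact Submodule.add_mem _ h1 h2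

lemma mul_mem_of_span {S : Set H} {W' : Submodule k H} (b : H)
    (hgen : ∀ z ∈ S, z * b ∈ W') : ∀ w ∈ Submodule.span k S, w * b ∈ W' := by
  intro w hw
  induction hw using Submodule.span_induction with
  | mem z hz => exact hgen z hz
  | zero => simpa using W'.zero_mem
  | add _ _ _ _ h1 h2 => rw [add_mul]; exact W'.add_mem h1 h2
  | smul c _ _ h => rw [smul_mul_assoc]; exact W'.smul_mem c h

lemma mem_of_span_mul {S : Set H} {W' : Submodule k H} (b : H)
    (hgen : ∀ z ∈ S, b * z ∈ W') : ∀ w ∈ Submodule.span k S, b * w ∈ W' := by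
  intro w hw
  induction hw using Submodule.span_induction with
  | mem z hz => exact hgen z hz
  | zero => simpa using W'.zero_mem
  | add _ _ _ _ h1 h2 => rw [mul_add]; exact W'.add_mem h1 h2
  | smul c _ _ h => rw [mul_smul_comm]; exact W'.smul_mem c h

end UDData

end MasterAux

noncomputable section MasterLemma

namespace UDData

variable {k : Type*} [Field k] {Γ : Type*} [CommGroup Γ] [Fintype Γ] {θ : ℕ}
  {Dat : LiftingDatum k Γ θ} {H : Type*} [Ring H] [HopfAlgebra k H]
  (UD : UDData k Γ θ Dat H)

theorem master : ∀ (N : ℕ) (n : Fin θ → ℕ), (∑ i, n i) = N →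
    Coalgebra.comul (R := k) (UD.xpow n) - (1 : H) ⊗ₜ[k] UD.xpow n
      - ∑ l, dlt Dat n l • (UD.x l ⊗ₜ[k] (UD.u (Dat.g l) * UD.xpow (n - eV l)))
      ∈ UD.Errn n := by
  intro N
  induction N using Nat.strong_induction_on with
  | _ N ih =>
    intro n hN
    by_cases hn0 : n = 0
    · subst hn0
      rw [UD.xpow_zero]
      have hz : ∀ l : Fin θ, dlt Dat (0 : Fin θ → ℕ) l
          • (UD.x l ⊗ₜ[k] (UD.u (Dat.g l) * UD.xpow ((0 : Fin θ → ℕ) - eV l))) = 0 := by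
        intro l
        rw [dlt_zero rfl, zero_smul]
      rw [Finset.sum_congr rfl (fun l _ => hz l), Finset.sum_const_zero]
      have : Coalgebra.comul (R := k) (1 : H) = (1 : H) ⊗ₜ[k] (1 : H) := by
        rw [Bialgebra.comul_one, Algebra.TensorProduct.one_def]
      rw [this, sub_zero, sub_self]
      exact Submodule.zero_mem _
    · obtain ⟨l₀, p, hpe, hpsupp, hnsupp, hsucc, hrest, hsum, hX⟩ := UD.xpow_decomp n hn0
      have ihp := ih (∑ i, p i) (by omega) p rfl
      set P := UD.xpow p with hP
      set L := UD.x l₀ with hL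
      set Uu := UD.u (Dat.g l₀) with hUu
      set Sp := ∑ l, dlt Dat p l • (UD.x l ⊗ₜ[k] (UD.u (Dat.g l) * UD.xpow (p - eV l)))
        with hSp
      set Ep := Coalgebra.comul (R := k) P - (1 : H) ⊗ₜ[k] P - Sp with hEp
      have hmemEp : Ep ∈ UD.Errn p := ihp
      have hcomulP : Coalgebra.comul (R := k) P = (1 : H) ⊗ₜ[k] P + Sp + Ep := by
        rw [hEp]; abel
      have hcomL : Coalgebra.comul (R := k) L = L ⊗ₜ[k] Uu + (1 : H) ⊗ₜ[k] L :=
        UD.comul_x l₀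
      have hcn : Coalgebra.comul (R := k) (UD.xpow n)
          = ((1 : H) ⊗ₜ[k] P + Sp + Ep) * (L ⊗ₜ[k] Uu + (1 : H) ⊗ₜ[k] L) := by
        rw [hX, Bialgebra.comul_mul, hcomulP, hcomL]
      have h11 : ((1 : H) ⊗ₜ[k] P) * ((1 : H) ⊗ₜ[k] L) = (1 : H) ⊗ₜ[k] UD.xpow n := by
        rw [Algebra.TensorProduct.tmul_mul_tmul, one_mul, ← hX]
      have hscP : P * Uu = ((scU Dat (Dat.g l₀) p : kˣ) : k) • (Uu * P) :=
        UD.xpow_mul_u (∑ i, p i) p rfl (Dat.g l₀)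
      -- the terms for `l ≠ l₀` match up
      have hterm : ∀ l, l ≠ l₀ →
          dlt Dat n l • (UD.x l ⊗ₜ[k] (UD.u (Dat.g l) * UD.xpow (n - eV l)))
          = dlt Dat p l • ((UD.x l ⊗ₜ[k] (UD.u (Dat.g l) * UD.xpow (p - eV l)))
              * ((1 : H) ⊗ₜ[k] L)) := by
        intro l hl
        have hnj : ∀ j, n j = p j + eV l₀ j := fun j => by rw [hpe]; rfl
        have htens : UD.xpow (p - eV l) * L = UD.xpow (n - eV l) := by
          rw [UD.xpow_mul_x _ l₀ (fun j hj => by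
            simp [Pi.sub_apply, hpsupp j hj])]
          congr 1
          funext j
          have h1 := hnj j
          by_cases hjl : j = l
          · subst hjl
            have e1 : eV j j = 1 := eV_same j
            have e2 : eV l₀ j = 0 := eV_ne hl
            simp only [Pi.add_apply, Pi.sub_apply, e1, e2] at h1 ⊢
            omega
          · have e1 : eV l j = 0 := eV_ne hjl
            by_cases hjl0 : j = l₀
            · subst hjl0
              have e2 : eV j j = 1 := eV_same j
              simp only [Pi.add_apply, Pi.sub_apply, e1, e2] at h1 ⊢
              omega
            · have e2 : eV l₀ j = 0 := eV_ne hjl0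
              simp only [Pi.add_apply, Pi.sub_apply, e1, e2] at h1 ⊢
              omega
        have hd : dlt Dat n l = dlt Dat p l := by
          rcases lt_or_gt_of_ne hl with hlt | hgt
          · exact dlt_congr (fun j hj => (hrest j (ne_of_lt (hj.trans hlt))).symm)
              (hrest l hl).symm
          · rw [dlt_zero (hnsupp l hgt), dlt_zero]
            rw [hrest l hl]
            exact hnsupp l hgt
        rw [Algebra.TensorProduct.tmul_mul_tmul, mul_one, mul_assoc, htens, hd]
      -- the `l₀` term
      have hnp : n - eV l₀ = p := by
        funext j
        have hnj : n j = p j + eV l₀ j := by rw [hpe]; rfl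
        by_cases hj : j = l₀
        · subst hj
          have e : eV j j = 1 := eV_same j
          simp only [Pi.sub_apply, e] at hnj ⊢
          omega
        · have e : eV l₀ j = 0 := eV_ne hj
          simp only [Pi.sub_apply, e] at hnj ⊢
          omega
      have hstep : dlt Dat n l₀ = dlt Dat p l₀ + ((scU Dat (Dat.g l₀) p : kˣ) : k) := by
        rw [hpe]
        exact dlt_step p l₀ hpsupp
      have hl0term : ((1 : H) ⊗ₜ[k] P) * (L ⊗ₜ[k] Uu)
          + dlt Dat p l₀ • ((UD.x l₀ ⊗ₜ[k] (UD.u (Dat.g l₀) * UD.xpow (p - eV l₀)))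
              * ((1 : H) ⊗ₜ[k] L))
          = dlt Dat n l₀ • (UD.x l₀ ⊗ₜ[k] (UD.u (Dat.g l₀) * UD.xpow (n - eV l₀))) := by
        have h1 : ((1 : H) ⊗ₜ[k] P) * (L ⊗ₜ[k] Uu)
            = ((scU Dat (Dat.g l₀) p : kˣ) : k) • (L ⊗ₜ[k] (Uu * P)) := by
          rw [Algebra.TensorProduct.tmul_mul_tmul, one_mul, hscP, TensorProduct.tmul_smul]
        rw [hnp, h1, hstep, add_smul]
        rw [add_comm (dlt Dat p l₀ • _)]
        congr 1
        by_cases hpl : p l₀ = 0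
        · rw [dlt_zero hpl, zero_smul, zero_smul]
        · have htens : UD.xpow (p - eV l₀) * L = P := by
            rw [UD.xpow_mul_x _ l₀ (fun j hj => by simp [Pi.sub_apply, hpsupp j hj])]
            rw [hP]
            congr 1
            funext j
            by_cases hj : j = l₀
            · subst hj
              have e : eV j j = 1 := eV_same j
              simp only [Pi.add_apply, Pi.sub_apply, e]
              omega
            · have e : eV l₀ j = 0 := eV_ne hj
              simp only [Pi.add_apply, Pi.sub_apply, e]
              omega
          rw [Algebra.TensorProduct.tmul_mul_tmul, mul_one, mul_assoc, htens]
      -- claim : the two "degree |n|-1" pieces assemble to the new sum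
      have hclaim : ((1 : H) ⊗ₜ[k] P) * (L ⊗ₜ[k] Uu) + Sp * ((1 : H) ⊗ₜ[k] L)
          = ∑ l, dlt Dat n l • (UD.x l ⊗ₜ[k] (UD.u (Dat.g l) * UD.xpow (n - eV l))) := by
        have hSpL : Sp * ((1 : H) ⊗ₜ[k] L)
            = ∑ l, dlt Dat p l • ((UD.x l ⊗ₜ[k] (UD.u (Dat.g l) * UD.xpow (p - eV l)))
                * ((1 : H) ⊗ₜ[k] L)) := by
          rw [hSp, Finset.sum_mul]
          exact Finset.sum_congr rfl (fun l _ => smul_mul_assoc _ _ _)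
        rw [hSpL, ← Finset.add_sum_erase _ _ (Finset.mem_univ l₀),
          ← Finset.add_sum_erase _
            (fun l => dlt Dat n l • (UD.x l ⊗ₜ[k] (UD.u (Dat.g l) * UD.xpow (n - eV l))))
            (Finset.mem_univ l₀), ← add_assoc, hl0term]
        congr 1
        apply Finset.sum_congr rfl
        intro l hlmem
        exact (hterm l (Finset.ne_of_mem_erase hlmem)).symm
      -- memberships
      have hWlow_x : ∀ z ∈ {z : H | ∃ (h : Γ) (q : Fin θ → ℕ),
          (∀ i, q i ≤ p i) ∧ (∑ i, q i) + 2 ≤ (∑ i, p i) ∧ z = UD.u h * UD.xpow q},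
          z * L ∈ UD.Wlow n := by
        rintro z ⟨h, q, hq1, hq2, rfl⟩
        rw [mul_assoc, UD.xpow_mul_x q l₀ (fun j hj => Nat.eq_zero_of_le_zero
          ((hq1 j).trans_eq (hpsupp j hj)))]
        apply Submodule.subset_span
        refine ⟨h, q + eV l₀, ?_, ?_, rfl⟩
        · intro i
          rw [hpe]
          rw [Pi.add_apply, Pi.add_apply]
          exact Nat.add_le_add (hq1 i) le_rfl
        · have e1 : ∑ i, (q + eV l₀) i = (∑ i, q i) + 1 := by
            simp only [Pi.add_apply]
            rw [Finset.sum_add_distrib, sum_eV]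
          omega
      have hWlow_u : ∀ z ∈ {z : H | ∃ (h : Γ) (q : Fin θ → ℕ),
          (∀ i, q i ≤ p i) ∧ (∑ i, q i) + 2 ≤ (∑ i, p i) ∧ z = UD.u h * UD.xpow q},
          z * Uu ∈ UD.Wlow n := by
        rintro z ⟨h, q, hq1, hq2, rfl⟩
        rw [mul_assoc, UD.xpow_mul_u (∑ i, q i) q rfl (Dat.g l₀), mul_smul_comm,
          UD.u_mul_monomial]
        apply Submodule.smul_mem
        apply Submodule.subset_span
        refine ⟨h * Dat.g l₀, q, ?_, ?_, rfl⟩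
        · intro i
          refine (hq1 i).trans ?_
          rw [hpe, Pi.add_apply]
          exact Nat.le_add_right _ _
        · omega
      have hm1 : Ep * ((1 : H) ⊗ₜ[k] L) ∈ UD.Errn n :=
        range_mul_tmul_mem (UD.Wlow p) (UD.Wlow n) 1 L
          (mul_mem_of_span L hWlow_x) hmemEp
      have hm2 : Ep * (L ⊗ₜ[k] Uu) ∈ UD.Errn n :=
        range_mul_tmul_mem (UD.Wlow p) (UD.Wlow n) L Uu
          (mul_mem_of_span Uu hWlow_u) hmemEp
      have hm3 : Sp * (L ⊗ₜ[k] Uu) ∈ UD.Errn n := by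
        rw [hSp, Finset.sum_mul]
        apply Submodule.sum_mem
        intro l _
        by_cases hpl : p l = 0
        · rw [dlt_zero hpl, zero_smul, zero_mul]
          exact Submodule.zero_mem _
        · rw [smul_mul_assoc]
          apply Submodule.smul_mem
          rw [Algebra.TensorProduct.tmul_mul_tmul, mul_assoc,
            UD.xpow_mul_u (∑ i, (p - eV l) i) (p - eV l) rfl (Dat.g l₀), mul_smul_comm,
            UD.u_mul_monomial, TensorProduct.tmul_smul]
          apply Submodule.smul_mem
          apply tmul_mem_range
          apply Submodule.subset_span
          refine ⟨Dat.g l * Dat.g l₀, p - eV l, ?_, ?_, rfl⟩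
          · intro i
            refine (sub_eV_le p l i).trans ?_
            rw [hpe, Pi.add_apply]
            exact Nat.le_add_right _ _
          · have := sum_sub_eV p l (Nat.pos_of_ne_zero hpl)
            omega
      have hfinal : Coalgebra.comul (R := k) (UD.xpow n) - (1 : H) ⊗ₜ[k] UD.xpow n
          - ∑ l, dlt Dat n l • (UD.x l ⊗ₜ[k] (UD.u (Dat.g l) * UD.xpow (n - eV l)))
          = Sp * (L ⊗ₜ[k] Uu) + Ep * (L ⊗ₜ[k] Uu) + Ep * ((1 : H) ⊗ₜ[k] L) := by
        rw [hcn, add_mul, add_mul, mul_add, mul_add, mul_add, h11, ← hclaim]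
        abel
      rw [hfinal]
      exact Submodule.add_mem _ (Submodule.add_mem _ hm3 hm2) hm1

end UDData

end MasterLemma

noncomputable section FbAux
open Classical

lemma NN_pos {k : Type*} [Field k] {Γ : Type*} [CommGroup Γ] [Fintype Γ] {θ : ℕ}
    (Dat : LiftingDatum k Γ θ) (i : Fin θ) : 0 < Dat.NN i := by
  rw [LiftingDatum.NN]
  apply orderOf_pos_iff.mpr
  rw [isOfFinOrder_iff_pow_eq_one]
  refine ⟨Fintype.card Γ, Fintype.card_pos, ?_⟩
  rw [← map_pow, pow_card_eq_one, map_one]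

namespace UDData

variable {k : Type*} [Field k] {Γ : Type*} [CommGroup Γ] [Fintype Γ] {θ : ℕ}
  {Dat : LiftingDatum k Γ θ} {H : Type*} [Ring H] [HopfAlgebra k H]
  (UD : UDData k Γ θ Dat H)

/-- Exponent vector as an element of the indexing set of the PBW basis. -/
def hatF (n : Fin θ → ℕ) (hn : ∀ i, n i < Dat.NN i) : ∀ i : Fin θ, Fin (Dat.NN i) :=
  fun i => ⟨n i, hn i⟩

lemma hatF_inj {n t : Fin θ → ℕ} {hn : ∀ i, n i < Dat.NN i} {ht : ∀ i, t i < Dat.NN i}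
    (h : hatF n hn = hatF t ht) : n = t := by
  funext i
  exact congrArg Fin.val (congrFun h i)

lemma basis_monomial (g : Γ) (n : Fin θ → ℕ) (hn : ∀ i, n i < Dat.NN i) :
    UD.basis (g, hatF n hn) = UD.u g * UD.xpow n := by
  rw [UD.basis_eq]
  rfl

lemma coord_basis (b b' : Γ × (∀ i : Fin θ, Fin (Dat.NN i))) :
    UD.basis.coord b' (UD.basis b) = if b = b' then 1 else 0 := by
  rw [Module.Basis.coord_apply, Module.Basis.repr_self, Finsupp.single_apply]

lemma coord_monomial (G : Γ) (t : Fin θ → ℕ) (ht : ∀ i, t i < Dat.NN i)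
    (g : Γ) (n : Fin θ → ℕ) (hn : ∀ i, n i < Dat.NN i) :
    UD.basis.coord (G, hatF t ht) (UD.u g * UD.xpow n)
      = if g = G ∧ n = t then 1 else 0 := by
  rw [← UD.basis_monomial g n hn, coord_basis]
  have hiff : ((g, hatF n hn) = ((G, hatF t ht) : Γ × (∀ i : Fin θ, Fin (Dat.NN i))))
      ↔ (g = G ∧ n = t) := by
    constructor
    · intro h
      rw [Prod.ext_iff] at h
      exact ⟨h.1, hatF_inj h.2⟩
    · rintro ⟨rfl, rfl⟩
      rfl
  rw [if_congr hiff rfl rfl]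

/-- Contraction of the second tensor factor with the `b`-th coordinate. -/
def fb (b : Γ × (∀ i : Fin θ, Fin (Dat.NN i))) : H ⊗[k] H →ₗ[k] H :=
  (TensorProduct.rid k H).toLinearMap ∘ₗ LinearMap.lTensor H (UD.basis.coord b)

lemma fb_tmul (b : Γ × (∀ i : Fin θ, Fin (Dat.NN i))) (a h' : H) :
    UD.fb b (a ⊗ₜ[k] h') = UD.basis.coord b h' • a := by
  simp [fb, TensorProduct.rid_tmul]

lemma fb_mem (A : Subalgebra k H) {t : H ⊗[k] H}
    (ht : t ∈ LinearMap.range (TensorProduct.map (Subalgebra.toSubmodule A).subtype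
      (LinearMap.id (R := k) (M := H)))) (b : Γ × (∀ i : Fin θ, Fin (Dat.NN i))) :
    UD.fb b t ∈ A := by
  obtain ⟨s, rfl⟩ := ht
  induction s using TensorProduct.induction_on with
  | zero => simp only [map_zero]; exact A.zero_mem
  | tmul a h' =>
    rw [TensorProduct.map_tmul, fb_tmul]
    exact A.smul_mem a.2 _
  | add s1 s2 h1 h2 =>
    rw [map_add, map_add]
    exact A.add_mem h1 h2

lemma fb_vanish (b : Γ × (∀ i : Fin θ, Fin (Dat.NN i))) (W : Submodule k H)
    (hW : ∀ w ∈ W, UD.basis.coord b w = 0) {t : H ⊗[k] H}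
    (ht : t ∈ LinearMap.range (LinearMap.lTensor (R := k) H W.subtype)) :
    UD.fb b t = 0 := by
  obtain ⟨s, rfl⟩ := ht
  induction s using TensorProduct.induction_on with
  | zero => simp
  | tmul a w =>
    rw [LinearMap.lTensor_tmul, fb_tmul]
    rw [show (W.subtype w : H) = (w : H) from rfl, hW w w.2, zero_smul]
  | add s1 s2 h1 h2 => rw [map_add, map_add, h1, h2, add_zero]

lemma coord_vanish_Wlow (G : Γ) (t : Fin θ → ℕ) (ht : ∀ i, t i < Dat.NN i)
    (n : Fin θ → ℕ) (hn : ∀ i, n i < Dat.NN i) (hSig : (∑ i, n i) ≤ (∑ i, t i) + 1) :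
    ∀ w ∈ UD.Wlow n, UD.basis.coord (G, hatF t ht) w = 0 := by
  intro w hw
  induction hw using Submodule.span_induction with
  | mem z hz =>
    obtain ⟨h, q, hq1, hq2, rfl⟩ := hz
    rw [UD.coord_monomial G t ht h q (fun i => lt_of_le_of_lt (hq1 i) (hn i))]
    rw [if_neg]
    rintro ⟨-, rfl⟩
    omega
  | zero => simp
  | add y z _ _ h1 h2 => rw [map_add, h1, h2, add_zero]
  | smul a y _ h1 => rw [map_smul, h1, smul_zero]

theorem fb_comul_monomial (G : Γ) (t : Fin θ → ℕ) (ht : ∀ i, t i < Dat.NN i)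
    (g : Γ) (n : Fin θ → ℕ) (hn : ∀ i, n i < Dat.NN i)
    (hSig : (∑ i, n i) ≤ (∑ i, t i) + 1) :
    UD.fb (G, hatF t ht) (Coalgebra.comul (R := k) (UD.u g * UD.xpow n))
      = (if g = G ∧ n = t then UD.u g else 0)
        + ∑ l, (if g * Dat.g l = G ∧ n - eV l = t ∧ 0 < n l
            then dlt Dat n l • (UD.u g * UD.x l) else 0) := by
  set En := Coalgebra.comul (R := k) (UD.xpow n) - (1 : H) ⊗ₜ[k] UD.xpow n
      - ∑ l, dlt Dat n l • (UD.x l ⊗ₜ[k] (UD.u (Dat.g l) * UD.xpow (n - eV l))) with hEn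
  have hmem : En ∈ UD.Errn n := UD.master (∑ i, n i) n rfl
  have hsplit : Coalgebra.comul (R := k) (UD.u g * UD.xpow n)
      = (UD.u g) ⊗ₜ[k] (UD.u g * UD.xpow n)
        + ∑ l, dlt Dat n l • ((UD.u g * UD.x l)
            ⊗ₜ[k] (UD.u g * (UD.u (Dat.g l) * UD.xpow (n - eV l))))
        + (UD.u g ⊗ₜ[k] UD.u g) * En := by
    have hcm : Coalgebra.comul (R := k) (UD.u g * UD.xpow n)
        = (UD.u g ⊗ₜ[k] UD.u g) * Coalgebra.comul (R := k) (UD.xpow n) := by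
      rw [Bialgebra.comul_mul, UD.comul_u]
    have hdec : Coalgebra.comul (R := k) (UD.xpow n) = (1 : H) ⊗ₜ[k] UD.xpow n
        + (∑ l, dlt Dat n l • (UD.x l ⊗ₜ[k] (UD.u (Dat.g l) * UD.xpow (n - eV l)))) + En := by
      rw [hEn]; abel
    rw [hcm, hdec, mul_add, mul_add]
    congr 1
    congr 1
    · rw [Algebra.TensorProduct.tmul_mul_tmul, mul_one]
    · rw [Finset.mul_sum]
      apply Finset.sum_congr rfl
      intro l _
      rw [mul_smul_comm, Algebra.TensorProduct.tmul_mul_tmul]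
  rw [hsplit, map_add, map_add]
  have hp3 : UD.fb (G, hatF t ht) ((UD.u g ⊗ₜ[k] UD.u g) * En) = 0 := by
    apply UD.fb_vanish _ (UD.Wlow n) (UD.coord_vanish_Wlow G t ht n hn hSig)
    apply tmul_mul_range_mem (UD.Wlow n) (UD.Wlow n) (UD.u g) (UD.u g) _ hmem
    apply mem_of_span_mul
    rintro z ⟨h, q, hq1, hq2, rfl⟩
    rw [u_mul_monomial]
    exact Submodule.subset_span ⟨g * h, q, hq1, hq2, rfl⟩
  have hp1 : UD.fb (G, hatF t ht) ((UD.u g) ⊗ₜ[k] (UD.u g * UD.xpow n))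
      = if g = G ∧ n = t then UD.u g else 0 := by
    rw [fb_tmul, UD.coord_monomial G t ht g n hn]
    by_cases hc : g = G ∧ n = t
    · rw [if_pos hc, if_pos hc, one_smul]
    · rw [if_neg hc, if_neg hc, zero_smul]
  have hp2 : UD.fb (G, hatF t ht) (∑ l, dlt Dat n l • ((UD.u g * UD.x l)
        ⊗ₜ[k] (UD.u g * (UD.u (Dat.g l) * UD.xpow (n - eV l)))))
      = ∑ l, (if g * Dat.g l = G ∧ n - eV l = t ∧ 0 < n l
          then dlt Dat n l • (UD.u g * UD.x l) else 0) := by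
    rw [map_sum]
    apply Finset.sum_congr rfl
    intro l _
    rw [map_smul, UD.u_mul_monomial, fb_tmul,
      UD.coord_monomial G t ht (g * Dat.g l) (n - eV l)
        (fun i => lt_of_le_of_lt (sub_eV_le n l i) (hn i)), smul_smul]
    by_cases h0 : 0 < n l
    · by_cases hc : g * Dat.g l = G ∧ n - eV l = t
      · rw [if_pos hc, if_pos (show g * Dat.g l = G ∧ n - eV l = t ∧ 0 < n l from
          ⟨hc.1, hc.2, h0⟩), mul_one]
      · rw [if_neg hc, if_neg (show ¬(g * Dat.g l = G ∧ n - eV l = t ∧ 0 < n l) from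
          fun hx => hc ⟨hx.1, hx.2.1⟩), mul_zero, zero_smul]
    · rw [dlt_zero (Nat.eq_zero_of_not_pos h0),
        if_neg (show ¬(g * Dat.g l = G ∧ n - eV l = t ∧ 0 < n l) from
          fun hx => h0 hx.2.2), zero_mul, zero_smul]
  rw [hp1, hp2, hp3, add_zero]

lemma sub_eV_ne {n : Fin θ → ℕ} {l : Fin θ} (h : 0 < n l) : n - eV l ≠ n := by
  intro heq
  have := congrFun heq l
  simp only [Pi.sub_apply, eV_same] at this
  omega

end UDData

end FbAux

noncomputable section DecompAux
open Classical

namespace UDData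

variable {k : Type*} [Field k] {Γ : Type*} [CommGroup Γ] [Fintype Γ] {θ : ℕ}
  {Dat : LiftingDatum k Γ θ} {H : Type*} [Ring H] [HopfAlgebra k H]
  (UD : UDData k Γ θ Dat H)

lemma coord_u (G g : Γ) :
    UD.basis.coord (G, hatF (0 : Fin θ → ℕ) (fun i => NN_pos Dat i)) (UD.u g)
      = if g = G then 1 else 0 := by
  have h1 : UD.u g = UD.u g * UD.xpow 0 := by rw [UD.xpow_zero, mul_one]
  rw [h1, UD.coord_monomial G 0 (fun i => NN_pos Dat i) g 0 (fun i => NN_pos Dat i)]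
  by_cases h : g = G
  · rw [if_pos (show g = G ∧ (0 : Fin θ → ℕ) = 0 from ⟨h, rfl⟩), if_pos h]
  · rw [if_neg (show ¬(g = G ∧ (0 : Fin θ → ℕ) = 0) from fun hx => h hx.1), if_neg h]

lemma span_u_decomp {c : H} (hc : c ∈ Submodule.span k (Set.range UD.u)) :
    c = ∑ G : Γ,
      UD.basis.coord (G, hatF (0 : Fin θ → ℕ) (fun i => NN_pos Dat i)) c • UD.u G := by
  induction hc using Submodule.span_induction with
  | mem z hz =>
    obtain ⟨g, rfl⟩ := hz
    rw [Finset.sum_congr rfl (fun G _ => by rw [UD.coord_u G g, ite_smul, one_smul,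
      zero_smul])]
    rw [Finset.sum_ite_eq]
    rw [if_pos (Finset.mem_univ g)]
  | zero => simp
  | add y z _ _ ihy ihz =>
    conv_lhs => rw [ihy, ihz]
    rw [← Finset.sum_add_distrib]
    apply Finset.sum_congr rfl
    intro G _
    rw [map_add, add_smul]
  | smul a y _ ihy =>
    conv_lhs => rw [ihy]
    rw [Finset.smul_sum]
    apply Finset.sum_congr rfl
    intro G _
    rw [map_smul, smul_smul]
    rfl

lemma u_inv_mem (A : Subalgebra k H) {g : Γ} (hg : UD.u g ∈ A) : UD.u g⁻¹ ∈ A := by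
  have ho : 0 < orderOf g := orderOf_pos g
  have h1 : g ^ (orderOf g - 1) * g = 1 := by
    rw [← pow_succ, Nat.sub_add_cancel ho, pow_orderOf_eq_one]
  rw [show (g⁻¹ : Γ) = g ^ (orderOf g - 1) from inv_eq_of_mul_eq_one_left h1, map_pow]
  exact A.pow_mem hg _

/-- The spanning family used for the contribution of `r` in part (b). -/
def vf (g₀ : Γ) (kk : Fin θ) : Option (Fin θ) → H := fun o =>
  Option.elim o (UD.u (g₀ * Dat.g kk))
    (fun l => if kk < l then UD.u (g₀ * Dat.g kk * (Dat.g l)⁻¹) * UD.x l else 0)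

lemma vf_none (g₀ : Γ) (kk : Fin θ) : UD.vf g₀ kk none = UD.u (g₀ * Dat.g kk) := rfl

lemma vf_some (g₀ : Γ) (kk : Fin θ) (l : Fin θ) :
    UD.vf g₀ kk (some l)
      = if kk < l then UD.u (g₀ * Dat.g kk * (Dat.g l)⁻¹) * UD.x l else 0 := rfl

end UDData

end DecompAux

noncomputable section
open Classical

/-- The graded lexicographic order on exponent vectors: `n < m` iff `|n| < |m|`, or
`|n| = |m|` and at the first index where they differ one has `n_j < m_j`. -/
def GrlexLT {θ : ℕ} (n m : Fin θ → ℕ) : Prop :=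
  (∑ i, n i) < (∑ i, m i) ∨
    ((∑ i, n i) = (∑ i, m i) ∧ ∃ j : Fin θ, (∀ l : Fin θ, l < j → n l = m l) ∧ n j < m j)

lemma GrlexLT.sum_le {θ : ℕ} {n m : Fin θ → ℕ} (h : GrlexLT n m) :
    (∑ i, n i) ≤ ∑ i, m i := by
  rcases h with h | ⟨h, -⟩
  · exact le_of_lt h
  · exact le_of_eq h

lemma GrlexLT.ne {θ : ℕ} {n m : Fin θ → ℕ} (h : GrlexLT n m) : n ≠ m := by
  rintro rfl
  rcases h with h | ⟨-, j, -, hj⟩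
  · exact absurd rfl (ne_of_lt h)
  · omega

lemma grlex_aux {θ : ℕ} {n m : Fin θ → ℕ} {l kk : Fin θ} (hlt : GrlexLT n m)
    (h2 : n - UDData.eV l = m - UDData.eV kk) (h3 : 0 < n l) (hkk : 0 < m kk) :
    kk < l := by
  classical
  have h2' : ∀ i, n i - UDData.eV l i = m i - UDData.eV kk i := fun i => congrFun h2 i
  by_cases hlk : l = kk
  · subst hlk
    exfalso
    apply hlt.ne
    funext i
    have := h2' i
    by_cases hi : i = l
    · subst hi
      rw [UDData.eV_same] at this
      omega
    · rw [UDData.eV_ne hi] at this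
      omega
  -- component facts
  have hnl : n l = m l + 1 := by
    have := h2' l
    rw [UDData.eV_same, UDData.eV_ne hlk] at this
    omega
  have hnkk : n kk = m kk - 1 ∧ 0 < m kk := by
    have := h2' kk
    rw [UDData.eV_same, UDData.eV_ne (Ne.symm hlk)] at this
    exact ⟨by omega, hkk⟩
  have hother : ∀ i, i ≠ l → i ≠ kk → n i = m i := by
    intro i hil hikk
    have := h2' i
    rw [UDData.eV_ne hil, UDData.eV_ne hikk] at this
    omega
  -- sums are equal
  have hsums : (∑ i, n i) = ∑ i, m i := by
    rw [← Finset.add_sum_erase _ n (Finset.mem_univ l),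
      ← Finset.add_sum_erase _ m (Finset.mem_univ l),
      ← Finset.add_sum_erase _ n (Finset.mem_erase.mpr ⟨Ne.symm hlk, Finset.mem_univ kk⟩),
      ← Finset.add_sum_erase _ m (Finset.mem_erase.mpr ⟨Ne.symm hlk, Finset.mem_univ kk⟩)]
    have hre : ∑ i ∈ (Finset.univ.erase l).erase kk, n i
        = ∑ i ∈ (Finset.univ.erase l).erase kk, m i := by
      apply Finset.sum_congr rfl
      intro i hi
      have h1 := Finset.ne_of_mem_erase hi
      have h2 := Finset.ne_of_mem_erase (Finset.mem_of_mem_erase hi)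
      exact hother i h2 h1
    rw [hre]
    omega
  rcases hlt with hcase | ⟨-, j, hagree, hj⟩
  · omega
  · have hjkk : j = kk := by
      by_contra hjne
      by_cases hjl : j = l
      · subst hjl; omega
      · have := hother j hjl hjne; omega
    rcases lt_trichotomy kk l with h | h | h
    · exact h
    · exact absurd h (Ne.symm hlk)
    · exfalso
      have hlj : l < j := by rw [hjkk]; exact h
      have := hagree l hlj
      omega


/-- **Theorem.** Let `A` be a right coideal subalgebra of `U(D)` and let `y ∈ A` be nonzero
with leading coefficient `c ∈ kΓ` and degree `m`, i.e. `y = c·x^m + r` where `r` is a linear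
combination of monomials `u_g x^n` with `n` strictly smaller than `m` in the graded
lexicographic order. Then (a) `c ∈ A`, and (b) for every index `k` with `m_k > 0` there are
scalars `β_{k+1}, …, β_θ, α ∈ k` such that
`x_k + Σ_{ℓ>k} β_ℓ u_{g_k} u_{g_ℓ}⁻¹ x_ℓ + α u_{g_k} ∈ A`. -/
theorem leading_coefficient_in_coideal_subalgebra
    {k : Type*} [Field k] [IsAlgClosed k] [CharZero k]
    {Γ : Type*} [CommGroup Γ] [Fintype Γ] {θ : ℕ} {Dat : LiftingDatum k Γ θ}
    {H : Type*} [Ring H] [HopfAlgebra k H] (UD : UDData k Γ θ Dat H)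
    (A : Subalgebra k H) (hA : IsRightCoidealSubalgebra k A)
    (y : H) (hyA : y ∈ A) (hy0 : y ≠ 0)
    (c : H) (hc : c ∈ Submodule.span k (Set.range UD.u)) (hc0 : c ≠ 0)
    (m : Fin θ → ℕ) (hm : ∀ i, m i < Dat.NN i)
    (r : H) (hr : r ∈ Submodule.span k
      {z : H | ∃ (gg : Γ) (n : Fin θ → ℕ),
        (∀ i, n i < Dat.NN i) ∧ GrlexLT n m ∧ z = UD.u gg * UD.xpow n})
    (hy : y = c * UD.xpow m + r) :
    c ∈ A ∧
      ∀ kk : Fin θ, 0 < m kk →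
        ∃ (β : Fin θ → k) (α : k),
          UD.x kk + (∑ l ∈ Finset.Ioi kk, β l • (UD.u (Dat.g kk * (Dat.g l)⁻¹) * UD.x l))
            + α • UD.u (Dat.g kk) ∈ A := by
  classical
  set cg : Γ → k := fun G =>
    UD.basis.coord (G, UDData.hatF (0 : Fin θ → ℕ) (fun i => NN_pos Dat i)) c with hcg
  have hcdec : c = ∑ G : Γ, cg G • UD.u G := UD.span_u_decomp hc
  have hcomuly : Coalgebra.comul (R := k) y
      = (∑ G : Γ, cg G • Coalgebra.comul (R := k) (UD.u G * UD.xpow m))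
        + Coalgebra.comul (R := k) r := by
    rw [hy, map_add]
    congr 1
    have h1 : c * UD.xpow m = ∑ G : Γ, cg G • (UD.u G * UD.xpow m) := by
      conv_lhs => rw [hcdec]
      rw [Finset.sum_mul]
      exact Finset.sum_congr rfl (fun G _ => smul_mul_assoc _ _ _)
    rw [h1, map_sum]
    exact Finset.sum_congr rfl (fun G _ => map_smul _ _ _)
  have hfb_y : ∀ b, UD.fb b (Coalgebra.comul (R := k) y) ∈ A :=
    fun b => UD.fb_mem A (hA y hyA) b
  -- Part (a)
  have hGr : ∀ G : Γ, UD.fb (G, UDData.hatF m hm) (Coalgebra.comul (R := k) r) = 0 := by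
    intro G
    have hle : Submodule.span k {z : H | ∃ (gg : Γ) (n : Fin θ → ℕ),
        (∀ i, n i < Dat.NN i) ∧ GrlexLT n m ∧ z = UD.u gg * UD.xpow n}
        ≤ LinearMap.ker ((UD.fb (G, UDData.hatF m hm)) ∘ₗ
          (Coalgebra.comul (R := k) (A := H))) := by
      rw [Submodule.span_le]
      rintro z ⟨gg, n, hnN, hnlt, rfl⟩
      simp only [SetLike.mem_coe, LinearMap.mem_ker, LinearMap.comp_apply]
      rw [UD.fb_comul_monomial G m hm gg n hnN (le_trans hnlt.sum_le (Nat.le_succ _))]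
      rw [if_neg (show ¬(gg = G ∧ n = m) from fun hx => hnlt.ne hx.2), zero_add]
      apply Finset.sum_eq_zero
      intro l _
      rw [if_neg]
      rintro ⟨-, hEq, hpos⟩
      have hs := UDData.sum_sub_eV n l hpos
      rw [hEq] at hs
      have := hnlt.sum_le
      omega
    have hker := hle hr
    simpa using hker
  have hGlead : ∀ G : Γ, UD.fb (G, UDData.hatF m hm) (Coalgebra.comul (R := k) y)
      = cg G • UD.u G := by
    intro G
    rw [hcomuly, map_add, map_sum, hGr G, add_zero]
    have hone : ∀ g : Γ, UD.fb (G, UDData.hatF m hm)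
        (Coalgebra.comul (R := k) (UD.u g * UD.xpow m))
        = if g = G then UD.u g else 0 := by
      intro g
      rw [UD.fb_comul_monomial G m hm g m hm (Nat.le_succ _)]
      have h2 : ∑ l, (if g * Dat.g l = G ∧ m - UDData.eV l = m ∧ 0 < m l
          then dlt Dat m l • (UD.u g * UD.x l) else 0) = 0 := by
        apply Finset.sum_eq_zero
        intro l _
        rw [if_neg]
        rintro ⟨-, hEq, hpos⟩
        exact UDData.sub_eV_ne hpos hEq
      rw [h2, add_zero]
      by_cases hgG : g = G
      · rw [if_pos (show g = G ∧ m = m from ⟨hgG, rfl⟩), if_pos hgG]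
      · rw [if_neg (show ¬(g = G ∧ m = m) from fun hx => hgG hx.1), if_neg hgG]
    rw [Finset.sum_congr rfl (fun g _ => by rw [map_smul, hone g, smul_ite, smul_zero])]
    rw [Finset.sum_ite_eq', if_pos (Finset.mem_univ G)]
  have hparts : ∀ G : Γ, cg G • UD.u G ∈ A := by
    intro G
    rw [← hGlead G]
    exact hfb_y _
  have hcA : c ∈ A := by
    rw [hcdec]
    exact A.toSubmodule.sum_mem (fun G _ => hparts G)
  refine ⟨hcA, ?_⟩
  -- Part (b)
  intro kk hkk
  obtain ⟨g₀, hg₀⟩ : ∃ G : Γ, cg G ≠ 0 := by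
    by_contra hall
    push_neg at hall
    apply hc0
    rw [hcdec]
    apply Finset.sum_eq_zero
    intro G _
    rw [hall G, zero_smul]
  have hug₀ : UD.u g₀ ∈ A := by
    have h2 := A.smul_mem (hparts g₀) (cg g₀)⁻¹
    rwa [smul_smul, inv_mul_cancel₀ hg₀, one_smul] at h2
  have hug₀inv : UD.u g₀⁻¹ ∈ A := UD.u_inv_mem A hug₀
  have hmk : ∀ i, (m - UDData.eV kk) i < Dat.NN i :=
    fun i => lt_of_le_of_lt (UDData.sub_eV_le m kk i) (hm i)
  have hsumk := UDData.sum_sub_eV m kk hkk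
  have hVr : UD.fb (g₀ * Dat.g kk, UDData.hatF (m - UDData.eV kk) hmk)
      (Coalgebra.comul (R := k) r)
      ∈ Submodule.span k (Set.range (UD.vf g₀ kk)) := by
    have hle : Submodule.span k {z : H | ∃ (gg : Γ) (n : Fin θ → ℕ),
        (∀ i, n i < Dat.NN i) ∧ GrlexLT n m ∧ z = UD.u gg * UD.xpow n}
        ≤ Submodule.comap ((UD.fb (g₀ * Dat.g kk, UDData.hatF (m - UDData.eV kk) hmk)) ∘ₗ
          (Coalgebra.comul (R := k) (A := H)))
          (Submodule.span k (Set.range (UD.vf g₀ kk))) := by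
      rw [Submodule.span_le]
      rintro z ⟨gg, n, hnN, hnlt, rfl⟩
      simp only [SetLike.mem_coe, Submodule.mem_comap, LinearMap.comp_apply]
      rw [UD.fb_comul_monomial (g₀ * Dat.g kk) (m - UDData.eV kk) hmk gg n hnN
        (by have := hnlt.sum_le; omega)]
      apply Submodule.add_mem
      · by_cases hc1 : gg = g₀ * Dat.g kk ∧ n = m - UDData.eV kk
        · rw [if_pos hc1, hc1.1]
          exact Submodule.subset_span ⟨none, rfl⟩
        · rw [if_neg hc1]
          exact Submodule.zero_mem _
      · apply Submodule.sum_mem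
        intro l _
        by_cases hc2 : gg * Dat.g l = g₀ * Dat.g kk
            ∧ n - UDData.eV l = m - UDData.eV kk ∧ 0 < n l
        · rw [if_pos hc2]
          have hlkk : kk < l := grlex_aux hnlt hc2.2.1 hc2.2.2 hkk
          have hgg : gg = g₀ * Dat.g kk * (Dat.g l)⁻¹ := by
            rw [← hc2.1, mul_inv_cancel_right]
          apply Submodule.smul_mem
          apply Submodule.subset_span
          refine ⟨some l, ?_⟩
          rw [UD.vf_some, if_pos hlkk, ← hgg]
        · rw [if_neg hc2]
          exact Submodule.zero_mem _
    have hmem := hle hr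
    simpa using hmem
  have hlead2 : UD.fb (g₀ * Dat.g kk, UDData.hatF (m - UDData.eV kk) hmk)
      (Coalgebra.comul (R := k) y)
      = (cg g₀ * dlt Dat m kk) • (UD.u g₀ * UD.x kk)
        + UD.fb (g₀ * Dat.g kk, UDData.hatF (m - UDData.eV kk) hmk)
            (Coalgebra.comul (R := k) r) := by
    rw [hcomuly, map_add, map_sum]
    congr 1
    have hone : ∀ g : Γ, UD.fb (g₀ * Dat.g kk, UDData.hatF (m - UDData.eV kk) hmk)
        (Coalgebra.comul (R := k) (UD.u g * UD.xpow m))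
        = if g = g₀ then dlt Dat m kk • (UD.u g₀ * UD.x kk) else 0 := by
      intro g
      rw [UD.fb_comul_monomial (g₀ * Dat.g kk) (m - UDData.eV kk) hmk g m hm (by omega)]
      rw [if_neg (show ¬(g = g₀ * Dat.g kk ∧ m = m - UDData.eV kk) from
        fun hx => UDData.sub_eV_ne hkk hx.2.symm), zero_add]
      have hsingle : (∑ l, (if g * Dat.g l = g₀ * Dat.g kk
            ∧ m - UDData.eV l = m - UDData.eV kk ∧ 0 < m l
          then dlt Dat m l • (UD.u g * UD.x l) else 0))
          = (if g * Dat.g kk = g₀ * Dat.g kk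
            ∧ m - UDData.eV kk = m - UDData.eV kk ∧ 0 < m kk
          then dlt Dat m kk • (UD.u g * UD.x kk) else 0) := by
        apply Finset.sum_eq_single
        · intro l _ hlkk
          rw [if_neg]
          rintro ⟨-, hEq, -⟩
          have hck := congrFun hEq kk
          simp only [Pi.sub_apply, UDData.eV_same, UDData.eV_ne (Ne.symm hlkk)] at hck
          omega
        · intro hmem
          exact absurd (Finset.mem_univ kk) hmem
      rw [hsingle]
      by_cases hg : g = g₀
      · rw [if_pos (show g * Dat.g kk = g₀ * Dat.g kk
            ∧ m - UDData.eV kk = m - UDData.eV kk ∧ 0 < m kk from ⟨by rw [hg], rfl, hkk⟩),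
          if_pos hg, hg]
      · rw [if_neg (show ¬(g * Dat.g kk = g₀ * Dat.g kk
            ∧ m - UDData.eV kk = m - UDData.eV kk ∧ 0 < m kk) from
            fun hx => hg (mul_right_cancel hx.1)), if_neg hg]
    rw [Finset.sum_congr rfl (fun g _ => by rw [map_smul, hone g, smul_ite, smul_zero])]
    rw [Finset.sum_ite_eq', if_pos (Finset.mem_univ g₀), smul_smul]
  have hzmem : (cg g₀ * dlt Dat m kk) • (UD.u g₀ * UD.x kk)
      + UD.fb (g₀ * Dat.g kk, UDData.hatF (m - UDData.eV kk) hmk)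
          (Coalgebra.comul (R := k) r) ∈ A := by
    rw [← hlead2]
    exact hfb_y _
  obtain ⟨cβ, hcβ⟩ := (Submodule.mem_span_range_iff_exists_fun k).mp hVr
  set κ : k := cg g₀ * dlt Dat m kk with hκdef
  have hκ : κ ≠ 0 := mul_ne_zero hg₀ (UDData.dlt_ne_zero hkk (hm kk))
  refine ⟨fun l => κ⁻¹ * cβ (some l), κ⁻¹ * cβ none, ?_⟩
  have e1 : UD.u g₀⁻¹ * (κ • (UD.u g₀ * UD.x kk)) = κ • UD.x kk := by
    rw [mul_smul_comm, ← mul_assoc, ← map_mul, inv_mul_cancel, map_one, one_mul]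
  have e2 : UD.u g₀⁻¹ * (∑ o : Option (Fin θ), cβ o • UD.vf g₀ kk o)
      = (cβ none) • UD.u (Dat.g kk)
        + ∑ l, cβ (some l) • (if kk < l
            then UD.u (Dat.g kk * (Dat.g l)⁻¹) * UD.x l else 0) := by
    rw [Finset.mul_sum, Fintype.sum_option]
    congr 1
    · rw [mul_smul_comm]
      congr 1
      rw [UD.vf_none, ← map_mul, inv_mul_cancel_left]
    · apply Finset.sum_congr rfl
      intro l _
      rw [mul_smul_comm]
      congr 1
      rw [UD.vf_some]
      by_cases hkl : kk < l
      · rw [if_pos hkl, if_pos hkl, ← mul_assoc, ← map_mul]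
        congr 2
        rw [mul_assoc g₀, inv_mul_cancel_left]
      · rw [if_neg hkl, if_neg hkl, mul_zero]
  have hRHS : κ⁻¹ • (UD.u g₀⁻¹ * (κ • (UD.u g₀ * UD.x kk)
        + UD.fb (g₀ * Dat.g kk, UDData.hatF (m - UDData.eV kk) hmk)
            (Coalgebra.comul (R := k) r)))
      = UD.x kk
        + (∑ l ∈ Finset.Ioi kk,
            (κ⁻¹ * cβ (some l)) • (UD.u (Dat.g kk * (Dat.g l)⁻¹) * UD.x l))
        + (κ⁻¹ * cβ none) • UD.u (Dat.g kk) := by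
    rw [mul_add, e1, ← hcβ, e2, smul_add, smul_add]
    have p1 : κ⁻¹ • (κ • UD.x kk) = UD.x kk := by
      rw [smul_smul, inv_mul_cancel₀ hκ, one_smul]
    have p2 : κ⁻¹ • ((cβ none) • UD.u (Dat.g kk))
        = (κ⁻¹ * cβ none) • UD.u (Dat.g kk) := smul_smul _ _ _
    have p3 : κ⁻¹ • (∑ l, cβ (some l) • (if kk < l
          then UD.u (Dat.g kk * (Dat.g l)⁻¹) * UD.x l else 0))
        = ∑ l ∈ Finset.Ioi kk,
            (κ⁻¹ * cβ (some l)) • (UD.u (Dat.g kk * (Dat.g l)⁻¹) * UD.x l) := by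
      rw [Finset.smul_sum]
      have hper : ∀ l : Fin θ, κ⁻¹ • (cβ (some l) • (if kk < l
            then UD.u (Dat.g kk * (Dat.g l)⁻¹) * UD.x l else 0))
          = (if kk < l
            then (κ⁻¹ * cβ (some l)) • (UD.u (Dat.g kk * (Dat.g l)⁻¹) * UD.x l) else 0) := by
        intro l
        rw [smul_smul, smul_ite, smul_zero]
      rw [Finset.sum_congr rfl (fun l _ => hper l), ← Finset.sum_filter]
      congr 1
      ext a
      simp
    rw [p1, p2, p3]
    abel
  have hgoal : UD.x kk
      + (∑ l ∈ Finset.Ioi kk,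
          (κ⁻¹ * cβ (some l)) • (UD.u (Dat.g kk * (Dat.g l)⁻¹) * UD.x l))
      + (κ⁻¹ * cβ none) • UD.u (Dat.g kk) ∈ A := by
    rw [← hRHS]
    exact A.smul_mem (A.mul_mem hug₀inv hzmem) κ⁻¹
  exact hgoal


end
end

section
/- In Ō_q(SL₂), for all i, j ∈ {0, …, N−1} and all k ∈ ℤ: x^i y^j z^k ↼ E = q^{−2(j+k)+1} (i)_{q²} x^{i−1} y^j z^k (interpreted as 0 when i = 0); x^i y^j z^k ↼ F = (−i + 2j + 2k)_{q²} x^{i+1} y^j z^k + q^{−2i} (j)_{q²} x^i y^{j−1} z^k (the second summand interpreted as 0 when j = 0); and x^i y^j z^k ↼ K = q^{2(i−j−k)} x^i y^j z^k. -/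
open scoped TensorProduct

noncomputable section

/-- The data of the finite-dimensional quotient `Ū_q(sl₂)` of the quantized enveloping
algebra, realized inside a Hopf algebra `H`: generators `K`, `E`, `F` satisfying the
defining relations, with the prescribed comultiplication, counit and antipode values,
together with a PBW basis (which pins down `H` as the presented Hopf algebra). -/
structure UqSl2Data (k : Type*) [Field k] (q : k) (N : ℕ) (H : Type*)
    [Ring H] [HopfAlgebra k H] where
  K : H
  E : H
  F : H
  rel_KN : K ^ N = 1
  rel_KE : K * E = q ^ 2 • (E * K)
  rel_KF : K * F = (q ^ 2)⁻¹ • (F * K)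
  rel_EN : E ^ N = 0
  rel_FN : F ^ N = 0
  rel_EF : (q - q⁻¹) • (E * F - F * E) = K - K ^ (N - 1)
  comul_K : Coalgebra.comul (R := k) K = K ⊗ₜ[k] K
  comul_E : Coalgebra.comul (R := k) E = E ⊗ₜ[k] K + (1 : H) ⊗ₜ[k] E
  comul_F : Coalgebra.comul (R := k) F = F ⊗ₜ[k] (1 : H) + (K ^ (N - 1)) ⊗ₜ[k] F
  counit_K : Coalgebra.counit (R := k) K = 1
  counit_E : Coalgebra.counit (R := k) E = 0
  counit_F : Coalgebra.counit (R := k) F = 0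
  antipode_K : HopfAlgebra.antipode (R := k) K = K ^ (N - 1)
  antipode_E : HopfAlgebra.antipode (R := k) E = -(E * K ^ (N - 1))
  antipode_F : HopfAlgebra.antipode (R := k) F = -(K * F)
  basis : Module.Basis (Fin N × Fin N × Fin N) k H
  basis_eq : ∀ i j l : Fin N,
    basis (i, j, l) = E ^ (i : ℕ) * F ^ (j : ℕ) * K ^ (l : ℕ)

namespace UqSl2Data

variable {k : Type*} [Field k] {q : k} {N : ℕ} {H : Type*} [Ring H] [HopfAlgebra k H]

/-- The element `F̃ = (q - q⁻¹) K F`. -/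
def Ftilde (D : UqSl2Data k q N H) : H := (q - q⁻¹) • (D.K * D.F)

end UqSl2Data

end

noncomputable section

/-- The data of the finite-dimensional quotient `Ō_q(SL₂)` of the quantized coordinate
algebra, realized inside a Hopf algebra `O`: generators `a`, `b`, `c`, `d` satisfying the
defining relations, the prescribed comultiplication and counit values, and a PBW basis
`{aⁱ bʲ cˡ}` (which pins down `O` as the presented Hopf algebra). -/
structure OqSL2Data (k : Type*) [Field k] (q : k) (N : ℕ) (O : Type*)
    [Ring O] [HopfAlgebra k O] where
  a : O
  b : O
  c : O
  d : O
  rel_ba : b * a = q • (a * b)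
  rel_ca : c * a = q • (a * c)
  rel_bc : b * c = c * b
  rel_db : d * b = q • (b * d)
  rel_dc : d * c = q • (c * d)
  rel_ad : a * d - q⁻¹ • (b * c) = 1
  rel_da : d * a - q • (b * c) = 1
  rel_aN : a ^ N = 1
  rel_dN : d ^ N = 1
  rel_bN : b ^ N = 0
  rel_cN : c ^ N = 0
  comul_a : Coalgebra.comul (R := k) a = a ⊗ₜ[k] a + b ⊗ₜ[k] c
  comul_b : Coalgebra.comul (R := k) b = a ⊗ₜ[k] b + b ⊗ₜ[k] d
  comul_c : Coalgebra.comul (R := k) c = c ⊗ₜ[k] a + d ⊗ₜ[k] c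
  comul_d : Coalgebra.comul (R := k) d = c ⊗ₜ[k] b + d ⊗ₜ[k] d
  counit_a : Coalgebra.counit (R := k) a = 1
  counit_b : Coalgebra.counit (R := k) b = 0
  counit_c : Coalgebra.counit (R := k) c = 0
  counit_d : Coalgebra.counit (R := k) d = 1
  basis : Module.Basis (Fin N × Fin N × Fin N) k O
  basis_eq : ∀ i j l : Fin N,
    basis (i, j, l) = a ^ (i : ℕ) * b ^ (j : ℕ) * c ^ (l : ℕ)

/-- Given a pairing `B : O × U → k`, the right action `f ↼ u = (f₍₁₎, u) f₍₂₎` of `U`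
on `O`. -/
def rAct (k : Type*) [CommSemiring k] {O U : Type*} [Semiring O] [Semiring U]
    [HopfAlgebra k O] [HopfAlgebra k U] (B : O →ₗ[k] U →ₗ[k] k) (f : O) (u : U) : O :=
  TensorProduct.lift ((LinearMap.lsmul k O).comp (B.flip u)) (Coalgebra.comul (R := k) f)

/-- The unique Hopf pairing `(−,−) : Ō_q(SL₂) × Ū_q(sl₂) → k` whose values on the
generators are the matrix entries of the 2-dimensional representation `ρ` of `Ū_q(sl₂)`
(with `ρ(E) = E₁₂`, `ρ(F) = E₂₁`, `ρ(K) = diag(q, q⁻¹)`). -/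
structure UqOqPairing (k : Type*) [Field k] (q : k) (N : ℕ)
    {U O : Type*} [Ring U] [Ring O] [HopfAlgebra k U] [HopfAlgebra k O]
    (DU : UqSl2Data k q N U) (DO : OqSL2Data k q N O) where
  B : O →ₗ[k] U →ₗ[k] k
  pair_mul_left : ∀ (f f' : O) (u : U), B (f * f') u =
    LinearMap.mul' k k (TensorProduct.map (B f) (B f') (Coalgebra.comul (R := k) u))
  pair_mul_right : ∀ (f : O) (u u' : U), B f (u * u') =
    LinearMap.mul' k k (TensorProduct.map (B.flip u) (B.flip u') (Coalgebra.comul (R := k) f))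
  pair_one_left : ∀ u : U, B 1 u = Coalgebra.counit (R := k) u
  pair_one_right : ∀ f : O, B f 1 = Coalgebra.counit (R := k) f
  pair_aE : B DO.a DU.E = 0
  pair_aF : B DO.a DU.F = 0
  pair_aK : B DO.a DU.K = q
  pair_bE : B DO.b DU.E = 1
  pair_bF : B DO.b DU.F = 0
  pair_bK : B DO.b DU.K = 0
  pair_cE : B DO.c DU.E = 0
  pair_cF : B DO.c DU.F = 1
  pair_cK : B DO.c DU.K = 0
  pair_dE : B DO.d DU.E = 0
  pair_dF : B DO.d DU.F = 0
  pair_dK : B DO.d DU.K = q⁻¹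

namespace UqOqPairing

variable {k : Type*} [Field k] {q : k} {N : ℕ} {U O : Type*} [Ring U] [Ring O]
  [HopfAlgebra k U] [HopfAlgebra k O] {DU : UqSl2Data k q N U} {DO : OqSL2Data k q N O}

/-- For a right coideal subalgebra `A` of `Ū_q(sl₂)`, the corresponding right coideal
subalgebra `A† = { f ∈ Ō_q(SL₂) : f ↼ a = ε(a)f for all a ∈ A }` of `Ō_q(SL₂)`. -/
def dagger (P : UqOqPairing k q N DU DO) (A : Subalgebra k U) : Set O :=
  {f : O | ∀ a ∈ A, rAct k P.B f a = Coalgebra.counit (R := k) a • f}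

end UqOqPairing

end

noncomputable section

/-- The `q`-integer `(m)_t = (1 - t^m)/(1 - t)` for `m ∈ ℤ` (so `(0)_t = 0`). -/
def qint {k : Type*} [Field k] (t : k) (m : ℤ) : k := (1 - t ^ m) / (1 - t)

section Aux

variable {k : Type*} [Field k] {q : k} {N : ℕ} {U O : Type*} [Ring U] [Ring O]
  [HopfAlgebra k U] [HopfAlgebra k O] {DU : UqSl2Data k q N U} {DO : OqSL2Data k q N O}

theorem rAct_smul (B : O →ₗ[k] U →ₗ[k] k) (α : k) (f : O) (u : U) :
    rAct k B (α • f) u = α • rAct k B f u := by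
  simp [rAct, map_smul]

theorem rAct_add (B : O →ₗ[k] U →ₗ[k] k) (f g : O) (u : U) :
    rAct k B (f + g) u = rAct k B f u + rAct k B g u := by
  simp [rAct, map_add]

theorem rAct_zero_right (B : O →ₗ[k] U →ₗ[k] k) (f : O) :
    rAct k B f (0 : U) = 0 := by
  have h0 : TensorProduct.lift ((LinearMap.lsmul k O).comp (B.flip (0:U))) = 0 := by
    apply TensorProduct.ext'; intro f g; simp
  rw [rAct, h0]; simp

theorem rAct_one_left (P : UqOqPairing k q N DU DO) (u : U) :
    rAct k P.B (1 : O) u = Coalgebra.counit (R := k) u • (1 : O) := by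
  simp [rAct, Bialgebra.comul_one, Algebra.TensorProduct.one_def, P.pair_one_left]

theorem rAct_one_right (P : UqOqPairing k q N DU DO) (f : O) :
    rAct k P.B f (1 : U) = f := by
  have hB : P.B.flip (1 : U) = Coalgebra.counit (R := k) := by
    ext f; exact P.pair_one_right f
  have hmap : TensorProduct.lift ((LinearMap.lsmul k O).comp
      (Coalgebra.counit (R := k) (A := O)))
      = (TensorProduct.lid k O).toLinearMap ∘ₗ
        (LinearMap.rTensor O (Coalgebra.counit (R := k) (A := O))) := by
    apply TensorProduct.ext'
    intro f g
    simp
  rw [rAct, hB, hmap]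
  simp [Coalgebra.rTensor_counit_comul]

/-- Master rule: if `Δu = u₁ ⊗ u₂ + u₃ ⊗ u₄`, the action of `u` on a product. -/
theorem rAct_mul_of_comul (P : UqOqPairing k q N DU DO) {u u1 u2 u3 u4 : U}
    (hu : Coalgebra.comul (R := k) u = u1 ⊗ₜ[k] u2 + u3 ⊗ₜ[k] u4) (f g : O) :
    rAct k P.B (f * g) u
      = rAct k P.B f u1 * rAct k P.B g u2 + rAct k P.B f u3 * rAct k P.B g u4 := by
  rw [rAct, Bialgebra.comul_mul]
  rw [rAct, rAct, rAct, rAct]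
  generalize Coalgebra.comul (R := k) f = s
  generalize Coalgebra.comul (R := k) g = t
  induction s using TensorProduct.induction_on with
  | zero => simp
  | add s1 s2 h1 h2 => simp only [add_mul, map_add, h1, h2]; abel
  | tmul f1 f2 =>
    induction t using TensorProduct.induction_on with
    | zero => simp
    | add t1 t2 h1 h2 => simp only [mul_add, map_add, h1, h2]; abel
    | tmul g1 g2 =>
      simp only [Algebra.TensorProduct.tmul_mul_tmul, TensorProduct.lift.tmul,
        LinearMap.coe_comp, Function.comp_apply, LinearMap.flip_apply,
        LinearMap.lsmul_apply]
      rw [P.pair_mul_left, hu]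
      simp only [map_add, TensorProduct.map_tmul, LinearMap.mul'_apply]
      rw [add_smul, smul_mul_smul_comm, smul_mul_smul_comm]

end Aux
section Aux2

variable {k : Type*} [Field k] {q : k} {N : ℕ} {U O : Type*} [Ring U] [Ring O]
  [HopfAlgebra k U] [HopfAlgebra k O] {DU : UqSl2Data k q N U} {DO : OqSL2Data k q N O}

theorem pair_pow_K (P : UqOqPairing k q N DU DO) (m : ℕ) :
    P.B DO.a (DU.K ^ m) = q ^ m ∧ P.B DO.b (DU.K ^ m) = 0 ∧
    P.B DO.c (DU.K ^ m) = 0 ∧ P.B DO.d (DU.K ^ m) = q⁻¹ ^ m := by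
  induction m with
  | zero =>
    simp only [pow_zero, P.pair_one_right]
    refine ⟨DO.counit_a, DO.counit_b, DO.counit_c, DO.counit_d⟩
  | succ m ih =>
    obtain ⟨ha, hb, hc, hd⟩ := ih
    rw [pow_succ']
    refine ⟨?_, ?_, ?_, ?_⟩ <;>
      rw [P.pair_mul_right] <;>
      simp [DO.comul_a, DO.comul_b, DO.comul_c, DO.comul_d, ha, hb, hc, hd,
        P.pair_aK, P.pair_bK, P.pair_cK, P.pair_dK, pow_succ', mul_comm]
end Aux2
section Aux3

variable {k : Type*} [Field k] {q : k} {N : ℕ} {U O : Type*} [Ring U] [Ring O]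
  [HopfAlgebra k U] [HopfAlgebra k O] {DU : UqSl2Data k q N U} {DO : OqSL2Data k q N O}
variable (P : UqOqPairing k q N DU DO)

theorem rAct_a_E : rAct k P.B DO.a DU.E = DO.c := by
  simp [rAct, DO.comul_a, P.pair_aE, P.pair_bE]
theorem rAct_b_E : rAct k P.B DO.b DU.E = DO.d := by
  simp [rAct, DO.comul_b, P.pair_aE, P.pair_bE]
theorem rAct_c_E : rAct k P.B DO.c DU.E = 0 := by
  simp [rAct, DO.comul_c, P.pair_cE, P.pair_dE]
theorem rAct_d_E : rAct k P.B DO.d DU.E = 0 := by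
  simp [rAct, DO.comul_d, P.pair_cE, P.pair_dE]

theorem rAct_a_F : rAct k P.B DO.a DU.F = 0 := by
  simp [rAct, DO.comul_a, P.pair_aF, P.pair_bF]
theorem rAct_b_F : rAct k P.B DO.b DU.F = 0 := by
  simp [rAct, DO.comul_b, P.pair_aF, P.pair_bF]
theorem rAct_c_F : rAct k P.B DO.c DU.F = DO.a := by
  simp [rAct, DO.comul_c, P.pair_cF, P.pair_dF]
theorem rAct_d_F : rAct k P.B DO.d DU.F = DO.b := by
  simp [rAct, DO.comul_d, P.pair_cF, P.pair_dF]

theorem rAct_a_K : rAct k P.B DO.a DU.K = q • DO.a := by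
  simp [rAct, DO.comul_a, P.pair_aK, P.pair_bK]
theorem rAct_b_K : rAct k P.B DO.b DU.K = q • DO.b := by
  simp [rAct, DO.comul_b, P.pair_aK, P.pair_bK]
theorem rAct_c_K : rAct k P.B DO.c DU.K = q⁻¹ • DO.c := by
  simp [rAct, DO.comul_c, P.pair_cK, P.pair_dK]
theorem rAct_d_K : rAct k P.B DO.d DU.K = q⁻¹ • DO.d := by
  simp [rAct, DO.comul_d, P.pair_cK, P.pair_dK]

variable (hqN : q ^ N = 1) (hq0 : q ≠ 0) (hN1 : 1 < N)

include hqN hq0 hN1 in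
theorem qpow_pred : q ^ (N - 1) = q⁻¹ := by
  have : q * q ^ (N - 1) = 1 := by
    rw [← pow_succ']
    have h : N - 1 + 1 = N := by omega
    rw [h]; exact hqN
  field_simp
  rw [mul_comm] at this
  exact this

include hqN hq0 hN1 in
theorem qinvpow_pred : (q⁻¹) ^ (N - 1) = q := by
  rw [qpow_pred (q := q⁻¹) (by rw [inv_pow, hqN, inv_one]) (by simpa) hN1, inv_inv]

include hqN hq0 hN1 in
theorem rAct_a_Km : rAct k P.B DO.a (DU.K ^ (N - 1)) = q⁻¹ • DO.a := by
  have h := pair_pow_K P (N := N) (N - 1)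
  simp [rAct, DO.comul_a, h.1, h.2.1, h.2.2.1, h.2.2.2,
    qpow_pred hqN hq0 hN1, qinvpow_pred hqN hq0 hN1]

include hqN hq0 hN1 in
theorem rAct_b_Km : rAct k P.B DO.b (DU.K ^ (N - 1)) = q⁻¹ • DO.b := by
  have h := pair_pow_K P (N := N) (N - 1)
  simp [rAct, DO.comul_b, h.1, h.2.1, h.2.2.1, h.2.2.2,
    qpow_pred hqN hq0 hN1, qinvpow_pred hqN hq0 hN1]

include hqN hq0 hN1 in
theorem rAct_c_Km : rAct k P.B DO.c (DU.K ^ (N - 1)) = q • DO.c := by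
  have h := pair_pow_K P (N := N) (N - 1)
  simp [rAct, DO.comul_c, h.1, h.2.1, h.2.2.1, h.2.2.2,
    qpow_pred hqN hq0 hN1, qinvpow_pred hqN hq0 hN1]

include hqN hq0 hN1 in
theorem rAct_d_Km : rAct k P.B DO.d (DU.K ^ (N - 1)) = q • DO.d := by
  have h := pair_pow_K P (N := N) (N - 1)
  simp [rAct, DO.comul_d, h.1, h.2.1, h.2.2.1, h.2.2.2,
    qpow_pred hqN hq0 hN1, qinvpow_pred hqN hq0 hN1]

end Aux3
section QintAux

variable {k : Type*} [Field k]

theorem qint_zero (t : k) : qint t 0 = 0 := by simp [qint]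

theorem qint_add (t : k) (ht1 : t ≠ 1) (ht0 : t ≠ 0) (m n : ℤ) :
    qint t (m + n) = qint t m + t ^ m * qint t n := by
  have h : 1 - t ≠ 0 := sub_ne_zero.mpr (Ne.symm ht1)
  rw [qint, qint, qint, zpow_add₀ ht0]
  field_simp
  ring

theorem qint_succ (t : k) (ht1 : t ≠ 1) (ht0 : t ≠ 0) (m : ℤ) :
    qint t (m + 1) = qint t m + t ^ m := by
  rw [qint_add t ht1 ht0 m 1]
  have h : 1 - t ≠ 0 := sub_ne_zero.mpr (Ne.symm ht1)
  have h1 : qint t 1 = 1 := by rw [qint, zpow_one]; field_simp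
  rw [h1, mul_one]

theorem qint_one (t : k) (ht1 : t ≠ 1) : qint t 1 = 1 := by
  have h : 1 - t ≠ 0 := sub_ne_zero.mpr (Ne.symm ht1)
  rw [qint, zpow_one]; field_simp

theorem qint_succ' (t : k) (ht1 : t ≠ 1) (ht0 : t ≠ 0) (m : ℤ) :
    qint t (m + 1) = 1 + t * qint t m := by
  rw [add_comm, qint_add t ht1 ht0 1 m, qint_one t ht1, zpow_one]

theorem qint_congr (t : k) {a b : ℤ} (h : t ^ a = t ^ b) : qint t a = qint t b := by
  rw [qint, qint, h]

end QintAux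

section Aux4

variable {k : Type*} [Field k] {q : k} {N : ℕ} {U O : Type*} [Ring U] [Ring O]
  [HopfAlgebra k U] [HopfAlgebra k O] {DU : UqSl2Data k q N U} {DO : OqSL2Data k q N O}
variable (P : UqOqPairing k q N DU DO)

theorem comul_Kpow (m : ℕ) :
    Coalgebra.comul (R := k) (DU.K ^ m) = (DU.K ^ m) ⊗ₜ[k] (DU.K ^ m) := by
  induction m with
  | zero => simp [Bialgebra.comul_one, Algebra.TensorProduct.one_def]
  | succ m ih =>
    rw [pow_succ, Bialgebra.comul_mul, ih, DU.comul_K,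
      Algebra.TensorProduct.tmul_mul_tmul]

theorem rAct_mul_K (f g : O) :
    rAct k P.B (f * g) DU.K = rAct k P.B f DU.K * rAct k P.B g DU.K := by
  have hu : Coalgebra.comul (R := k) DU.K
      = DU.K ⊗ₜ[k] DU.K + (0 : U) ⊗ₜ[k] (0 : U) := by
    rw [DU.comul_K]; simp
  rw [rAct_mul_of_comul P hu, rAct_zero_right, zero_mul, add_zero]

theorem rAct_mul_Km (f g : O) :
    rAct k P.B (f * g) (DU.K ^ (N - 1))
      = rAct k P.B f (DU.K ^ (N - 1)) * rAct k P.B g (DU.K ^ (N - 1)) := by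
  have hu : Coalgebra.comul (R := k) (DU.K ^ (N - 1))
      = (DU.K ^ (N - 1)) ⊗ₜ[k] (DU.K ^ (N - 1)) + (0 : U) ⊗ₜ[k] (0 : U) := by
    rw [comul_Kpow]; simp
  rw [rAct_mul_of_comul P hu, rAct_zero_right, zero_mul, add_zero]

theorem rAct_mul_E (f g : O) :
    rAct k P.B (f * g) DU.E
      = rAct k P.B f DU.E * rAct k P.B g DU.K + f * rAct k P.B g DU.E := by
  rw [rAct_mul_of_comul P DU.comul_E, rAct_one_right]

theorem rAct_mul_F (f g : O) :
    rAct k P.B (f * g) DU.F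
      = rAct k P.B f DU.F * g + rAct k P.B f (DU.K ^ (N - 1)) * rAct k P.B g DU.F := by
  rw [rAct_mul_of_comul P DU.comul_F, rAct_one_right]

theorem rAct_one_E : rAct k P.B (1 : O) DU.E = 0 := by
  rw [rAct_one_left, DU.counit_E, zero_smul]

theorem rAct_one_F : rAct k P.B (1 : O) DU.F = 0 := by
  rw [rAct_one_left, DU.counit_F, zero_smul]

theorem rAct_one_K : rAct k P.B (1 : O) DU.K = 1 := by
  rw [rAct_one_left, DU.counit_K, one_smul]

theorem counit_Kpow (m : ℕ) : Coalgebra.counit (R := k) (DU.K ^ m) = 1 := by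
  induction m with
  | zero => simp
  | succ m ih => rw [pow_succ, Bialgebra.counit_mul, ih, DU.counit_K, one_mul]

theorem rAct_one_Km : rAct k P.B (1 : O) (DU.K ^ (N - 1)) = 1 := by
  rw [rAct_one_left, counit_Kpow, one_smul]

end Aux4
section Aux5

variable {k : Type*} [Field k] {q : k} {N : ℕ} {U O : Type*} [Ring U] [Ring O]
  [HopfAlgebra k U] [HopfAlgebra k O] {DU : UqSl2Data k q N U} {DO : OqSL2Data k q N O}

theorem dpow_b (DO : OqSL2Data k q N O) (m : ℕ) :
    DO.d ^ m * DO.b = q ^ m • (DO.b * DO.d ^ m) := by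
  induction m with
  | zero => simp
  | succ m ih =>
    rw [pow_succ', mul_assoc, ih, mul_smul_comm, ← mul_assoc, DO.rel_db,
      smul_mul_assoc, smul_smul, pow_succ', mul_assoc]
    congr 1; ring

theorem dpow_c (DO : OqSL2Data k q N O) (m : ℕ) :
    DO.d ^ m * DO.c = q ^ m • (DO.c * DO.d ^ m) := by
  induction m with
  | zero => simp
  | succ m ih =>
    rw [pow_succ', mul_assoc, ih, mul_smul_comm, ← mul_assoc, DO.rel_dc,
      smul_mul_assoc, smul_smul, pow_succ', mul_assoc]
    congr 1; ring

theorem dpow_cycle (DO : OqSL2Data k q N O) (m : ℕ) :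
    DO.d ^ (N + m) = DO.d ^ m := by
  rw [pow_add, DO.rel_dN, one_mul]

section XY

variable (hqN : q ^ N = 1) (hq0 : q ≠ 0) (hN1 : 1 < N)
variable {x y : O} (hx : x = DO.b * DO.d ^ (N - 1)) (hy : y = DO.c * DO.d)

include hqN hq0 hN1 hx hy in
theorem bc_eq : DO.b * DO.c = q • (x * y) := by
  subst hx hy
  have e1 : DO.b * DO.d ^ (N - 1) * (DO.c * DO.d)
      = DO.b * ((DO.d ^ (N-1) * DO.c) * DO.d) := by
    rw [mul_assoc, mul_assoc]
  rw [e1, dpow_c DO (N-1), qpow_pred hqN hq0 hN1, smul_mul_assoc, mul_smul_comm,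
    mul_assoc]
  have h : N - 1 + 1 = N := by omega
  rw [← pow_succ, h, DO.rel_dN, mul_one, smul_smul, mul_inv_cancel₀ hq0, one_smul]

include hqN hq0 hN1 hx hy in
theorem yx_comm : y * x = (q ^ 2) • (x * y) := by
  have h1 : y * x = q • (DO.b * DO.c) := by
    subst hx hy
    have e1 : DO.c * DO.d * (DO.b * DO.d ^ (N-1))
        = DO.c * ((DO.d * DO.b) * DO.d ^ (N-1)) := by rw [mul_assoc, mul_assoc]
    rw [e1, DO.rel_db, smul_mul_assoc, mul_smul_comm, mul_assoc, ← pow_succ']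
    have h : N - 1 + 1 = N := by omega
    rw [h, DO.rel_dN, mul_one, DO.rel_bc]
  rw [h1, bc_eq hqN hq0 hN1 hx hy, smul_smul, sq]

include hqN hq0 hN1 hx hy in
theorem ypow_x_comm (j : ℕ) : y ^ j * x = ((q ^ 2) ^ j) • (x * y ^ j) := by
  induction j with
  | zero => simp
  | succ j ih =>
    rw [pow_succ', mul_assoc, ih, mul_smul_comm, ← mul_assoc,
      yx_comm hqN hq0 hN1 hx hy, smul_mul_assoc, smul_smul, pow_succ', mul_assoc]
    congr 1; ring

include hx hN1 in
theorem x_dpow (m : ℕ) (hm : 1 ≤ m) : x * DO.d ^ m = DO.b * DO.d ^ (m - 1) := by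
  subst hx
  rw [mul_assoc, ← pow_add]
  have h : N - 1 + m = N + (m - 1) := by omega
  rw [h, dpow_cycle]

include hqN hq0 hN1 hx in
theorem xx_eq : x * x = q⁻¹ • (DO.b * (DO.b * DO.d ^ (N - 2))) := by
  subst hx
  have e1 : DO.b * DO.d ^ (N-1) * (DO.b * DO.d ^ (N-1))
      = DO.b * ((DO.d ^ (N-1) * DO.b) * DO.d ^ (N-1)) := by rw [mul_assoc, mul_assoc]
  rw [e1, dpow_b DO (N-1), qpow_pred hqN hq0 hN1, smul_mul_assoc, mul_smul_comm,
    mul_assoc, ← pow_add]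
  have h : N - 1 + (N - 1) = N + (N - 2) := by omega
  rw [h, dpow_cycle]

include hqN hq0 hN1 hx in
theorem b_x_dpow : DO.b * (x * DO.d ^ (N - 1)) = q • (x * x) := by
  have e1 : x * DO.d ^ (N-1) = DO.b * DO.d ^ (N - 2) := by
    rw [x_dpow hN1 hx (N-1) (by omega)]
    have h : N - 1 - 1 = N - 2 := by omega
    rw [h]
  rw [e1, xx_eq hqN hq0 hN1 hx, smul_smul, mul_inv_cancel₀ hq0, one_smul]

end XY
end Aux5
section Aux6

variable {k : Type*} [Field k] {q : k} {N : ℕ} {U O : Type*} [Ring U] [Ring O]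
  [HopfAlgebra k U] [HopfAlgebra k O] {DU : UqSl2Data k q N U} {DO : OqSL2Data k q N O}
variable (P : UqOqPairing k q N DU DO)
variable (hqN : q ^ N = 1) (hq0 : q ≠ 0) (hN1 : 1 < N) (ht1 : q ^ 2 ≠ 1)
variable {x y : O} (hx : x = DO.b * DO.d ^ (N - 1)) (hy : y = DO.c * DO.d)

theorem rAct_dpow_K (m : ℕ) :
    rAct k P.B (DO.d ^ m) DU.K = (q⁻¹) ^ m • DO.d ^ m := by
  induction m with
  | zero => simpa using rAct_one_K P
  | succ m ih =>
    rw [pow_succ, rAct_mul_K P, ih, rAct_d_K P, smul_mul_smul_comm, ← pow_succ, ← pow_succ]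

include hqN hq0 hN1 in
theorem rAct_dpow_Km (m : ℕ) :
    rAct k P.B (DO.d ^ m) (DU.K ^ (N - 1)) = q ^ m • DO.d ^ m := by
  induction m with
  | zero => simpa using rAct_one_Km P
  | succ m ih =>
    rw [pow_succ, rAct_mul_Km P, ih, rAct_d_Km P hqN hq0 hN1,
      smul_mul_smul_comm, ← pow_succ, ← pow_succ]

theorem rAct_dpow_E (m : ℕ) : rAct k P.B (DO.d ^ m) DU.E = 0 := by
  induction m with
  | zero => simpa using rAct_one_E P
  | succ m ih =>
    rw [pow_succ, rAct_mul_E P, ih, rAct_d_E P, zero_mul, mul_zero, add_zero]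

include hqN hq0 hN1 ht1 in
theorem rAct_dpow_F (m : ℕ) :
    rAct k P.B (DO.d ^ m) DU.F
      = qint (q ^ 2) (m : ℤ) • (DO.b * DO.d ^ (m - 1)) := by
  induction m with
  | zero => simpa [qint_zero] using rAct_one_F P
  | succ m ih =>
    rw [pow_succ, rAct_mul_F P, ih, rAct_dpow_Km P hqN hq0 hN1, rAct_d_F P]
    rcases Nat.eq_zero_or_pos m with hm | hm
    · subst hm
      simp [qint_zero, qint_one _ ht1]
    · have e1 : DO.b * DO.d ^ (m - 1) * DO.d = DO.b * DO.d ^ m := by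
        rw [mul_assoc, ← pow_succ]
        have h : m - 1 + 1 = m := by omega
        rw [h]
      rw [smul_mul_assoc, e1, smul_mul_assoc, dpow_b DO m, smul_smul]
      have hcast : ((m + 1 : ℕ) : ℤ) = (m : ℤ) + 1 := by push_cast; ring
      have hq2 : (q ^ 2 : k) ≠ 0 := pow_ne_zero _ hq0
      rw [hcast, qint_succ _ ht1 hq2, add_smul]
      have h2 : (q ^ 2) ^ ((m : ℕ) : ℤ) = q ^ m * q ^ m := by
        rw [zpow_natCast, ← pow_mul, two_mul, pow_add]
      rw [h2]
      have h3 : m + 1 - 1 = m := by omega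
      rw [h3]

include hqN hq0 hN1 hx in
theorem rAct_x_K : rAct k P.B x DU.K = (q ^ 2) • x := by
  rw [hx, rAct_mul_K P, rAct_b_K P, rAct_dpow_K P, qinvpow_pred hqN hq0 hN1,
    smul_mul_smul_comm, ← hx, sq]

include hqN hq0 hN1 hx in
theorem rAct_x_Km : rAct k P.B x (DU.K ^ (N - 1)) = ((q ^ 2)⁻¹) • x := by
  rw [hx, rAct_mul_Km P, rAct_b_Km P hqN hq0 hN1, rAct_dpow_Km P hqN hq0 hN1,
    qpow_pred hqN hq0 hN1, smul_mul_smul_comm, ← hx]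
  congr 1
  rw [sq, mul_inv]

include hqN hq0 hN1 hx in
theorem rAct_x_E : rAct k P.B x DU.E = q • (1 : O) := by
  rw [hx, rAct_mul_E P, rAct_b_E P, rAct_dpow_K P, rAct_dpow_E P,
    qinvpow_pred hqN hq0 hN1, mul_zero, add_zero, mul_smul_comm, ← pow_succ']
  have h : N - 1 + 1 = N := by omega
  rw [h, DO.rel_dN]

include hqN hq0 hN1 ht1 hx in
theorem rAct_x_F : rAct k P.B x DU.F = qint (q ^ 2) (-1 : ℤ) • (x * x) := by
  rw [hx, rAct_mul_F P, rAct_b_F P, rAct_b_Km P hqN hq0 hN1,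
    rAct_dpow_F P hqN hq0 hN1 ht1, zero_mul, zero_add, smul_mul_assoc, mul_smul_comm,
    smul_smul]
  have e1 : DO.b * (DO.b * DO.d ^ (N - 2)) = q • (x * x) := by
    rw [xx_eq hqN hq0 hN1 hx, smul_smul, mul_inv_cancel₀ hq0, one_smul]
  have h : N - 1 - 1 = N - 2 := by omega
  rw [h, e1, smul_smul]
  congr 1
  have hqN2 : (q ^ 2) ^ N = 1 := by rw [← pow_mul, mul_comm, pow_mul, hqN, one_pow]
  have hq20 : (q ^ 2 : k) ≠ 0 := pow_ne_zero _ hq0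
  have hcg : qint (q ^ 2) (((N - 1 : ℕ)) : ℤ) = qint (q ^ 2) (-1) :=
    qint_congr _ (by rw [zpow_natCast, qpow_pred hqN2 hq20 hN1, zpow_neg_one])
  rw [← hcg, mul_comm (q⁻¹) _, mul_assoc, inv_mul_cancel₀ hq0, mul_one]
  rw [hx]

end Aux6
section Aux7

variable {k : Type*} [Field k] {q : k} {N : ℕ} {U O : Type*} [Ring U] [Ring O]
  [HopfAlgebra k U] [HopfAlgebra k O] {DU : UqSl2Data k q N U} {DO : OqSL2Data k q N O}
variable (P : UqOqPairing k q N DU DO)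
variable (hqN : q ^ N = 1) (hq0 : q ≠ 0) (hN1 : 1 < N) (ht1 : q ^ 2 ≠ 1)
variable {x y : O} (hx : x = DO.b * DO.d ^ (N - 1)) (hy : y = DO.c * DO.d)

include hy in
theorem rAct_y_K : rAct k P.B y DU.K = ((q ^ 2)⁻¹) • y := by
  rw [hy, rAct_mul_K P, rAct_c_K P, rAct_d_K P, smul_mul_smul_comm]
  congr 1
  rw [sq, mul_inv]

include hqN hq0 hN1 hy in
theorem rAct_y_Km : rAct k P.B y (DU.K ^ (N - 1)) = (q ^ 2) • y := by
  rw [hy, rAct_mul_Km P, rAct_c_Km P hqN hq0 hN1, rAct_d_Km P hqN hq0 hN1,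
    smul_mul_smul_comm, sq]

include hy in
theorem rAct_y_E : rAct k P.B y DU.E = 0 := by
  rw [hy, rAct_mul_E P, rAct_c_E P, rAct_d_E P, zero_mul, mul_zero, add_zero]

include hqN hq0 hN1 hx hy in
theorem rAct_y_F : rAct k P.B y DU.F = 1 + (1 + q ^ 2) • (x * y) := by
  rw [hy, rAct_mul_F P, rAct_c_F P, rAct_c_Km P hqN hq0 hN1, rAct_d_F P]
  have had : DO.a * DO.d = 1 + q⁻¹ • (DO.b * DO.c) := by
    have h := DO.rel_ad
    linear_combination (norm := noncomm_ring) h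
  rw [had, smul_mul_assoc, ← DO.rel_bc, bc_eq hqN hq0 hN1 hx hy,
    smul_smul, smul_smul, add_assoc, ← add_smul]
  congr 2
  · rw [inv_mul_cancel₀ hq0, sq]
  · rw [hy]

include hqN hq0 hN1 hx in
theorem rAct_xpow_K (i : ℕ) : rAct k P.B (x ^ i) DU.K = ((q ^ 2) ^ i) • x ^ i := by
  induction i with
  | zero => simpa using rAct_one_K P
  | succ i ih =>
    rw [pow_succ, rAct_mul_K P, ih, rAct_x_K P hqN hq0 hN1 hx, smul_mul_smul_comm,
      ← pow_succ, ← pow_succ]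

include hqN hq0 hN1 hx in
theorem rAct_xpow_Km (i : ℕ) :
    rAct k P.B (x ^ i) (DU.K ^ (N - 1)) = (((q ^ 2)⁻¹) ^ i) • x ^ i := by
  induction i with
  | zero => simpa using rAct_one_Km P
  | succ i ih =>
    rw [pow_succ, rAct_mul_Km P, ih, rAct_x_Km P hqN hq0 hN1 hx, smul_mul_smul_comm,
      ← pow_succ, ← pow_succ]

include hy in
theorem rAct_ypow_K (j : ℕ) : rAct k P.B (y ^ j) DU.K = (((q ^ 2)⁻¹) ^ j) • y ^ j := by
  induction j with
  | zero => simpa using rAct_one_K P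
  | succ j ih =>
    rw [pow_succ, rAct_mul_K P, ih, rAct_y_K P hy, smul_mul_smul_comm,
      ← pow_succ, ← pow_succ]

include hqN hq0 hN1 hy in
theorem rAct_ypow_Km (j : ℕ) :
    rAct k P.B (y ^ j) (DU.K ^ (N - 1)) = ((q ^ 2) ^ j) • y ^ j := by
  induction j with
  | zero => simpa using rAct_one_Km P
  | succ j ih =>
    rw [pow_succ, rAct_mul_Km P, ih, rAct_y_Km P hqN hq0 hN1 hy, smul_mul_smul_comm,
      ← pow_succ, ← pow_succ]

include hy in
theorem rAct_ypow_E (j : ℕ) : rAct k P.B (y ^ j) DU.E = 0 := by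
  induction j with
  | zero => simpa using rAct_one_E P
  | succ j ih =>
    rw [pow_succ, rAct_mul_E P, ih, rAct_y_E P hy, zero_mul, mul_zero, add_zero]

include hqN hq0 hN1 ht1 hx in
theorem rAct_xpow_E (i : ℕ) :
    rAct k P.B (x ^ i) DU.E = (q * qint (q ^ 2) (i : ℤ)) • x ^ (i - 1) := by
  have hq20 : (q ^ 2 : k) ≠ 0 := pow_ne_zero _ hq0
  induction i with
  | zero => simpa [qint_zero] using rAct_one_E P
  | succ i ih =>
    rw [pow_succ, rAct_mul_E P, ih, rAct_x_K P hqN hq0 hN1 hx, rAct_x_E P hqN hq0 hN1 hx,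
      smul_mul_smul_comm, mul_smul_comm, mul_one]
    have hcast : ((i + 1 : ℕ) : ℤ) = (i : ℤ) + 1 := by push_cast; ring
    rw [hcast, qint_succ' _ ht1 hq20, Nat.add_sub_cancel]
    rcases Nat.eq_zero_or_pos i with hi | hi
    · subst hi
      simp [qint_zero]
    · have e1 : x ^ (i - 1) * x = x ^ i := by
        rw [← pow_succ]
        congr 1
        omega
      rw [e1, ← add_smul]
      congr 1
      ring

include hqN hq0 hN1 ht1 hx in
theorem rAct_xpow_F (i : ℕ) :
    rAct k P.B (x ^ i) DU.F = qint (q ^ 2) (-(i : ℤ)) • x ^ (i + 1) := by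
  have hq20 : (q ^ 2 : k) ≠ 0 := pow_ne_zero _ hq0
  induction i with
  | zero => simpa [qint_zero] using rAct_one_F P
  | succ i ih =>
    rw [pow_succ, rAct_mul_F P, ih, rAct_xpow_Km P hqN hq0 hN1 hx,
      rAct_x_F P hqN hq0 hN1 ht1 hx, smul_mul_assoc, smul_mul_smul_comm]
    have e1 : x ^ (i + 1) * x = x ^ (i + 1 + 1) := by rw [← pow_succ]
    have e2 : x ^ i * (x * x) = x ^ (i + 1 + 1) := by
      rw [← mul_assoc, ← pow_succ, ← pow_succ]
    rw [e1, e2, ← add_smul]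
    congr 1
    have hinv : ((q ^ 2)⁻¹ : k) ^ i = (q ^ 2) ^ (-(i : ℤ)) := by
      rw [zpow_neg, zpow_natCast, inv_pow]
    have hcast : (-((i + 1 : ℕ) : ℤ)) = -(i : ℤ) + -1 := by push_cast; ring
    rw [hcast, qint_add _ ht1 hq20, hinv]

include hqN hq0 hN1 ht1 hx hy in
theorem rAct_ypow_F (j : ℕ) :
    rAct k P.B (y ^ j) DU.F
      = qint (q ^ 2) (2 * (j : ℤ)) • (x * y ^ j) + qint (q ^ 2) (j : ℤ) • y ^ (j - 1) := by
  have hq20 : (q ^ 2 : k) ≠ 0 := pow_ne_zero _ hq0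
  induction j with
  | zero => simpa [qint_zero] using rAct_one_F P
  | succ j ih =>
    rw [pow_succ, rAct_mul_F P, ih, rAct_ypow_Km P hqN hq0 hN1 hy,
      rAct_y_F P hqN hq0 hN1 hx hy]
    rw [add_mul, smul_mul_assoc, smul_mul_assoc, mul_assoc, smul_mul_assoc]
    have e0 : y ^ j * (1 + (1 + q ^ 2) • (x * y)) =
        y ^ j + (1 + q ^ 2) • (y ^ j * (x * y)) := by
      rw [mul_add, mul_one, mul_smul_comm]
    rw [e0]
    have e1 : y ^ j * (x * y) = ((q ^ 2) ^ j) • (x * y ^ (j + 1)) := by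
      rw [← mul_assoc, ypow_x_comm hqN hq0 hN1 hx hy, smul_mul_assoc, mul_assoc, ← pow_succ]
    rw [e1]
    simp only [← pow_succ]
    have hcast1 : (2 : ℤ) * ((j + 1 : ℕ) : ℤ) = 2 * (j : ℤ) + 1 + 1 := by push_cast; ring
    have hcast2 : ((j + 1 : ℕ) : ℤ) = (j : ℤ) + 1 := by push_cast; ring
    rw [hcast1, hcast2, qint_succ _ ht1 hq20, qint_succ _ ht1 hq20,
      qint_succ _ ht1 hq20, Nat.add_sub_cancel]
    have hz1 : ((q:k) ^ 2) ^ (2 * (j:ℤ)) = ((q ^ 2) ^ j) * ((q ^ 2) ^ j) := by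
      rw [← zpow_natCast (q ^ 2) j, ← zpow_add₀ hq20]
      congr 1
      ring
    have hz2 : ((q:k) ^ 2) ^ (2 * (j:ℤ) + 1) = ((q ^ 2) ^ j) * ((q ^ 2) ^ j) * (q ^ 2) := by
      rw [zpow_add_one₀ hq20, hz1]
    have hz3 : ((q:k) ^ 2) ^ ((j:ℤ)) = (q ^ 2) ^ j := zpow_natCast _ _
    rw [hz1, hz2, hz3]
    rcases Nat.eq_zero_or_pos j with hj | hj
    · subst hj
      simp only [Nat.cast_zero, qint_zero, zero_smul, zero_add, add_zero, zero_mul,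
        mul_zero, pow_zero, one_smul, one_mul, mul_one]
      match_scalars <;> ring
    · have e3 : j - 1 + 1 = j := by omega
      rw [e3]
      match_scalars <;> ring

end Aux7
/-- **Theorem.** In `Ō_q(SL₂)`, with `x = bd^{N-1}`, `y = cd`, `z = d²`, for all
`0 ≤ i, j ≤ N-1` and all `k ∈ ℤ`:
`xⁱyʲzᵏ ↼ E = q^{-2(j+k)+1} (i)_{q²} x^{i-1} yʲ zᵏ`,
`xⁱyʲzᵏ ↼ F = (-i+2j+2k)_{q²} x^{i+1} yʲ zᵏ + q^{-2i} (j)_{q²} xⁱ y^{j-1} zᵏ`, and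
`xⁱyʲzᵏ ↼ K = q^{2(i-j-k)} xⁱ yʲ zᵏ`. -/
theorem rAct_on_xyz_monomials
    {k : Type*} [Field k] [IsAlgClosed k] [CharZero k] {q : k} {N : ℕ}
    (hN : Odd N) (hN1 : 1 < N) (hq : IsPrimitiveRoot q N)
    {U O : Type*} [Ring U] [Ring O] [HopfAlgebra k U] [HopfAlgebra k O]
    (DU : UqSl2Data k q N U) (DO : OqSL2Data k q N O) (P : UqOqPairing k q N DU DO)
    (x y : O) (hx : x = DO.b * DO.d ^ (N - 1)) (hy : y = DO.c * DO.d)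
    (du : Oˣ) (hdu : (du : O) = DO.d)
    (i j : ℕ) (hi : i < N) (hj : j < N) (kk : ℤ) :
    rAct k P.B (x ^ i * y ^ j * ((du ^ (2 * kk) : Oˣ) : O)) DU.E
        = (q ^ (-2 * ((j : ℤ) + kk) + 1) * qint (q ^ 2) (i : ℤ)) •
            (x ^ (i - 1) * y ^ j * ((du ^ (2 * kk) : Oˣ) : O)) ∧
    rAct k P.B (x ^ i * y ^ j * ((du ^ (2 * kk) : Oˣ) : O)) DU.F
        = qint (q ^ 2) (-(i : ℤ) + 2 * j + 2 * kk) •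
            (x ^ (i + 1) * y ^ j * ((du ^ (2 * kk) : Oˣ) : O))
          + (q ^ (-2 * (i : ℤ)) * qint (q ^ 2) (j : ℤ)) •
            (x ^ i * y ^ (j - 1) * ((du ^ (2 * kk) : Oˣ) : O)) ∧
    rAct k P.B (x ^ i * y ^ j * ((du ^ (2 * kk) : Oˣ) : O)) DU.K
        = q ^ (2 * ((i : ℤ) - j - kk)) •
            (x ^ i * y ^ j * ((du ^ (2 * kk) : Oˣ) : O)) := by
  -- basic facts about q
  have hN0 : (N : ℤ) ≠ 0 := by omega
  have hqN : q ^ N = 1 := hq.pow_eq_one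
  have hq0 : q ≠ 0 := by
    intro h
    rw [h, zero_pow (by omega)] at hqN
    exact zero_ne_one hqN
  have ht1 : q ^ 2 ≠ 1 := by
    intro h
    have hdvd : N ∣ 2 := hq.dvd_of_pow_eq_one 2 h
    have h2 := Nat.le_of_dvd (by norm_num) hdvd
    have : N = 2 := by omega
    rw [this] at hN
    simp [Nat.odd_iff] at hN
  have hq20 : (q ^ 2 : k) ≠ 0 := pow_ne_zero _ hq0
  -- the exponent m
  set m : ℕ := ((2 * kk) % (N : ℤ)).toNat with hm
  have hmz : ((m : ℕ) : ℤ) = (2 * kk) % (N : ℤ) :=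
    Int.toNat_of_nonneg (Int.emod_nonneg _ hN0)
  have hmm : ((m : ℕ) : ℤ) % (N : ℤ) = (2 * kk) % (N : ℤ) := by
    rw [hmz, Int.emod_emod_of_dvd _ dvd_rfl]
  -- rewrite the unit power as d ^ m
  have hduN : du ^ (N : ℕ) = 1 := by
    ext
    rw [Units.val_pow_eq_pow_val, hdu, DO.rel_dN, Units.val_one]
  have hw : ((du ^ (2 * kk) : Oˣ) : O) = DO.d ^ m := by
    have h1 : du ^ (2 * kk) = du ^ (((m : ℕ)) : ℤ) := by
      rw [hmz]
      conv_lhs => rw [← Int.emod_add_mul_ediv (2 * kk) (N : ℤ)]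
      rw [zpow_add, zpow_mul, zpow_natCast, hduN, one_zpow, mul_one]
    rw [h1, zpow_natCast, Units.val_pow_eq_pow_val, hdu]
  -- scalar conversion helpers
  have key : ∀ a b : ℤ, a % (N : ℤ) = b % (N : ℤ) → (q : k) ^ a = q ^ b := by
    intro a b h
    have h1 : ∀ c : ℤ, (q : k) ^ c = q ^ (c % (N : ℤ)) := by
      intro c
      conv_lhs => rw [← Int.emod_add_mul_ediv c (N : ℤ)]
      rw [zpow_add₀ hq0, zpow_mul, zpow_natCast, hqN, one_zpow, mul_one]
    rw [h1 a, h1 b, h]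
  have hconv : ∀ n : ℕ, (((q ^ 2)⁻¹ : k)) ^ n = q ^ (-2 * (n : ℤ)) := by
    intro n
    rw [inv_pow, ← pow_mul, ← zpow_natCast q (2 * n), ← zpow_neg]
    congr 1
  have hconv2 : ∀ n : ℕ, ((q ^ 2 : k)) ^ n = q ^ (2 * (n : ℤ)) := by
    intro n
    rw [← pow_mul, ← zpow_natCast q (2 * n)]
    congr 1
  have hinvm : ((q⁻¹ : k)) ^ m = q ^ (-(m : ℤ)) := by
    rw [inv_pow, ← zpow_natCast q m, ← zpow_neg]
  have hsq : ∀ c : ℤ, ((q ^ 2 : k)) ^ c = q ^ (2 * c) := by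
    intro c
    rw [← zpow_natCast q 2, ← zpow_mul]
    norm_num
  have hqint_m : qint (q ^ 2) ((m : ℕ) : ℤ) = qint (q ^ 2) (2 * kk) := by
    apply qint_congr
    rw [hsq, hsq]
    exact key _ _ (Int.ModEq.mul_left 2 hmm)
  rw [hw]
  have htneg : (q ^ 2 : k) ^ (-(i : ℤ)) = ((q ^ 2)⁻¹) ^ i := by
    rw [zpow_neg, zpow_natCast, inv_pow]
  have ht2j : (q ^ 2 : k) ^ (2 * (j : ℤ)) = (q ^ 2) ^ j * (q ^ 2) ^ j := by
    rw [← zpow_natCast (q ^ 2) j, ← zpow_add₀ hq20]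
    congr 1
    ring
  refine ⟨?_, ?_, ?_⟩
  · -- E
    rw [rAct_mul_E P, rAct_mul_E P, rAct_xpow_E P hqN hq0 hN1 ht1 hx,
      rAct_ypow_K P hy, rAct_ypow_E P hy, rAct_dpow_K P, rAct_dpow_E P,
      mul_zero, add_zero, mul_zero, add_zero, smul_mul_smul_comm, smul_mul_smul_comm]
    congr 1
    have h3 : (-2 * ((j : ℤ) + kk) + 1) % (N : ℤ)
        = (-2 * (j : ℤ) + -(m : ℤ) + 1) % (N : ℤ) := by
      have h4 : -2 * ((j : ℤ) + kk) + 1 = -2 * (j : ℤ) + -(2 * kk) + 1 := by ring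
      rw [h4]
      exact ((Int.ModEq.refl (-2 * (j : ℤ))).add (Int.ModEq.neg hmm).symm).add_right 1
    rw [hconv j, hinvm, key _ _ h3, zpow_add₀ hq0, zpow_add₀ hq0, zpow_one]
    ring
  · -- F
    have hdF : rAct k P.B (DO.d ^ m) DU.F
        = qint (q ^ 2) ((m : ℕ) : ℤ) • (x * DO.d ^ m) := by
      rcases Nat.eq_zero_or_pos m with h0 | h0
      · rw [h0, pow_zero, rAct_one_F P]
        rw [Nat.cast_zero, qint_zero, zero_smul]
      · rw [rAct_dpow_F P hqN hq0 hN1 ht1 m, x_dpow hN1 hx m h0]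
    have hA : rAct k P.B (x ^ i * y ^ j) DU.F
        = qint (q ^ 2) (-(i : ℤ)) • (x ^ (i + 1) * y ^ j)
          + (((q ^ 2)⁻¹) ^ i * qint (q ^ 2) (2 * (j : ℤ))) • (x ^ (i + 1) * y ^ j)
          + (((q ^ 2)⁻¹) ^ i * qint (q ^ 2) (j : ℤ)) • (x ^ i * y ^ (j - 1)) := by
      rw [rAct_mul_F P, rAct_xpow_F P hqN hq0 hN1 ht1 hx, rAct_xpow_Km P hqN hq0 hN1 hx,
        rAct_ypow_F P hqN hq0 hN1 ht1 hx hy, smul_mul_assoc, mul_add,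
        smul_mul_smul_comm, smul_mul_smul_comm]
      have e1 : x ^ i * (x * y ^ j) = x ^ (i + 1) * y ^ j := by
        rw [← mul_assoc, ← pow_succ]
      rw [e1, add_assoc]
    have hKm : rAct k P.B (x ^ i * y ^ j) (DU.K ^ (N - 1))
        = (((q ^ 2)⁻¹) ^ i * (q ^ 2) ^ j) • (x ^ i * y ^ j) := by
      rw [rAct_mul_Km P, rAct_xpow_Km P hqN hq0 hN1 hx, rAct_ypow_Km P hqN hq0 hN1 hy,
        smul_mul_smul_comm]
    rw [rAct_mul_F P, hA, hKm, hdF]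
    rw [add_mul, add_mul, smul_mul_assoc, smul_mul_assoc, smul_mul_assoc,
      smul_mul_smul_comm]
    have hperm : (x ^ i * y ^ j) * (x * DO.d ^ m)
        = ((q ^ 2) ^ j) • (x ^ (i + 1) * y ^ j * DO.d ^ m) := by
      rw [← mul_assoc, mul_assoc (x ^ i), ypow_x_comm hqN hq0 hN1 hx hy,
        mul_smul_comm, smul_mul_assoc, ← mul_assoc, ← pow_succ]
    rw [hperm, smul_smul]
    rw [add_right_comm, ← add_smul, ← add_smul]
    congr 1
    · congr 1
      rw [hqint_m]
      have e2 : (-(i : ℤ) + 2 * (j : ℤ) + 2 * kk) = -(i : ℤ) + (2 * (j : ℤ) + 2 * kk) := by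
        ring
      rw [e2, qint_add _ ht1 hq20, qint_add _ ht1 hq20, htneg, ht2j]
      ring
    · congr 1
      rw [hconv i]
  · -- K
    rw [rAct_mul_K P, rAct_mul_K P, rAct_xpow_K P hqN hq0 hN1 hx,
      rAct_ypow_K P hy, rAct_dpow_K P, smul_mul_smul_comm, smul_mul_smul_comm]
    congr 1
    have h3 : (2 * ((i : ℤ) - j - kk)) % (N : ℤ)
        = (2 * (i : ℤ) + -2 * (j : ℤ) + -(m : ℤ)) % (N : ℤ) := by
      have h4 : 2 * ((i : ℤ) - j - kk) = 2 * (i : ℤ) + -2 * (j : ℤ) + -(2 * kk) := by ring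
      rw [h4]
      exact (Int.ModEq.refl (2 * (i : ℤ) + -2 * (j : ℤ))).add (Int.ModEq.neg hmm).symm
    rw [hconv2 i, hconv j, hinvm, key _ _ h3, zpow_add₀ hq0, zpow_add₀ hq0]

end
end
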